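/- arXiv:1501.06220 — 6 statements merged into one kernel-verified Lean document; each statement's English description precedes it below -/
import Mathlib

section
/- If f(x) = x + f₁x²/2! + f₂x³/3! + ... is a formal power series with q(x) = 1/f(x) satisfying the functional equation q(x)q(x+y) + q(−x)q(y) + q(−x−y)q(−y) = C (as a formal identity in two variables), then 2C = 3f₁² − f₂. -/
noncomputable def sub2 (f : PowerSeries ℚ) (s t : ℚ) : MvPowerSeries (Fin 2) ℚ :=
  fun d => (PowerSeries.coeff (R := ℚ) (d 0 + d 1) f) * ((d 0 + d 1).choose (d 0)) * s ^ (d 0) * t ^ (d 1)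

/-- `1 / f(s·x + t·y)` as an element of the field of fractions of `ℚ⟦x, y⟧`. -/
noncomputable def qv (f : PowerSeries ℚ) (s t : ℚ) : FractionRing (MvPowerSeries (Fin 2) ℚ) :=
  (algebraMap (MvPowerSeries (Fin 2) ℚ) (FractionRing (MvPowerSeries (Fin 2) ℚ)) (sub2 f s t))⁻¹

/-- The two-variable functional equation
`q(x)q(x+y) + q(-x)q(y) + q(-x-y)q(-y) = C` for `q = 1/f`. -/
def TwoVarEq (f : PowerSeries ℚ) (C : ℚ) : Prop :=
  qv f 1 0 * qv f 1 1 + qv f (-1) 0 * qv f 0 1 + qv f (-1) (-1) * qv f 0 (-1)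
    = (C : FractionRing (MvPowerSeries (Fin 2) ℚ))

/-- The exponent `x^i y^j` as a `Fin 2 →₀ ℕ`. -/
noncomputable def Dm (i j : ℕ) : Fin 2 →₀ ℕ := Finsupp.single 0 i + Finsupp.single 1 j

@[simp] lemma Dm_apply0 (i j : ℕ) : Dm i j 0 = i := by simp [Dm]
@[simp] lemma Dm_apply1 (i j : ℕ) : Dm i j 1 = j := by simp [Dm]

lemma eq_Dm (d : Fin 2 →₀ ℕ) : d = Dm (d 0) (d 1) := by
  ext a; fin_cases a <;> simp [Dm]

lemma Dm_add (i j k l : ℕ) : Dm i j + Dm k l = Dm (i + k) (j + l) := by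
  ext a; fin_cases a <;> simp [Dm]

lemma coeff_sub2 (f : PowerSeries ℚ) (s t : ℚ) (i j : ℕ) :
    MvPowerSeries.coeff (R := ℚ) (Dm i j) (sub2 f s t) =
      (PowerSeries.coeff (R := ℚ) (i + j) f) * ((i + j).choose i) * s ^ i * t ^ j := by
  rw [MvPowerSeries.coeff_apply]
  simp [sub2]

lemma coeff_mul_D (φ ψ : MvPowerSeries (Fin 2) ℚ) (i j : ℕ) :
    MvPowerSeries.coeff (R := ℚ) (Dm i j) (φ * ψ) =
      ∑ p ∈ Finset.range (i + 1), ∑ q ∈ Finset.range (j + 1),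
        MvPowerSeries.coeff (R := ℚ) (Dm p q) φ * MvPowerSeries.coeff (R := ℚ) (Dm (i - p) (j - q)) ψ := by
  rw [MvPowerSeries.coeff_mul, ← Finset.sum_product']
  refine Finset.sum_nbij' (fun x => (x.1 0, x.1 1))
    (fun p => (Dm p.1 p.2, Dm (i - p.1) (j - p.2))) ?_ ?_ ?_ ?_ ?_
  · rintro ⟨u, v⟩ hm
    rw [Finset.HasAntidiagonal.mem_antidiagonal] at hm
    have h0' : u 0 + v 0 = i := by
      have := congrArg (fun d => d 0) hm; simpa using this
    have h1' : u 1 + v 1 = j := by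
      have := congrArg (fun d => d 1) hm; simpa using this
    simp only [Finset.mem_product, Finset.mem_range]
    omega
  · rintro ⟨p, q⟩ hm
    rw [Finset.HasAntidiagonal.mem_antidiagonal, Dm_add]
    simp only [Finset.mem_product, Finset.mem_range] at hm
    congr 1 <;> omega
  · rintro ⟨u, v⟩ hm
    rw [Finset.HasAntidiagonal.mem_antidiagonal] at hm
    have h0' : u 0 + v 0 = i := by
      have := congrArg (fun d => d 0) hm; simpa using this
    have h1' : u 1 + v 1 = j := by
      have := congrArg (fun d => d 1) hm; simpa using this
    have hu : u = Dm (u 0) (u 1) := eq_Dm u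
    have hv : v = Dm (v 0) (v 1) := eq_Dm v
    simp only [Prod.mk.injEq]
    constructor
    · exact hu.symm
    · rw [hv]; congr 1 <;> omega
  · rintro ⟨p, q⟩ _; simp
  · rintro ⟨u, v⟩ hm
    rw [Finset.HasAntidiagonal.mem_antidiagonal] at hm
    have h0' : u 0 + v 0 = i := by
      have := congrArg (fun d => d 0) hm; simpa using this
    have h1' : u 1 + v 1 = j := by
      have := congrArg (fun d => d 1) hm; simpa using this
    have hu : u = Dm (u 0) (u 1) := eq_Dm u
    have hv : v = Dm (v 0) (v 1) := eq_Dm v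
    rw [show (i - u 0) = v 0 by omega, show (j - u 1) = v 1 by omega, ← hu, ← hv]

lemma sub2_ne_zero (f : PowerSeries ℚ) (h1 : PowerSeries.coeff (R := ℚ) 1 f = 1) (s t : ℚ)
    (hst : s = 0 ∧ t ≠ 0 ∨ s ≠ 0 ∧ t = 0 ∨ s ≠ 0 ∧ t ≠ 0) : sub2 f s t ≠ 0 := by
  intro h
  rcases hst with ⟨hs, ht⟩ | ⟨hs, ht⟩ | ⟨hs, ht⟩
  · have := congrArg (MvPowerSeries.coeff (R := ℚ) (Dm 0 1)) h
    rw [coeff_sub2] at this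
    simp [h1] at this
    exact ht this
  · have := congrArg (MvPowerSeries.coeff (R := ℚ) (Dm 1 0)) h
    rw [coeff_sub2] at this
    simp [h1] at this
    exact hs this
  · have := congrArg (MvPowerSeries.coeff (R := ℚ) (Dm 1 0)) h
    rw [coeff_sub2] at this
    simp [h1] at this
    exact hs this
section Coeffs
variable (f : PowerSeries ℚ) (fc : ℕ → ℚ)
  (hf0 : PowerSeries.coeff (R := ℚ) 0 f = 0) (h1 : PowerSeries.coeff (R := ℚ) 1 f = 1)
  (hf2 : PowerSeries.coeff (R := ℚ) 2 f = fc 1 / 2) (hf3 : PowerSeries.coeff (R := ℚ) 3 f = fc 2 / 6)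
  (hf4 : PowerSeries.coeff (R := ℚ) 4 f = fc 3 / 24)

set_option maxHeartbeats 4000000 in
include hf0 h1 hf2 hf3 hf4 in
lemma coeffT1 :
    MvPowerSeries.coeff (R := ℚ) (Dm 2 4)
      (sub2 f (-1) 0 * sub2 f 0 1 * (sub2 f (-1) (-1) * sub2 f 0 (-1)))
      = -(5/6) * fc 2 := by
  simp (config := { maxSteps := 10000000 }) only [coeff_mul_D, Finset.sum_range_succ,
    Finset.sum_range_zero, coeff_sub2, Nat.reduceSub, Nat.reduceAdd]
  norm_num [hf0, h1, hf2, hf3, hf4,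
    show Nat.choose 2 1 = 2 from rfl, show Nat.choose 3 1 = 3 from rfl,
    show Nat.choose 3 2 = 3 from rfl, show Nat.choose 4 1 = 4 from rfl,
    show Nat.choose 4 2 = 6 from rfl, show Nat.choose 4 3 = 4 from rfl,
    show Nat.choose 5 1 = 5 from rfl, show Nat.choose 5 2 = 10 from rfl,
    show Nat.choose 5 3 = 10 from rfl, show Nat.choose 5 4 = 5 from rfl,
    show Nat.choose 6 1 = 6 from rfl, show Nat.choose 6 2 = 15 from rfl,
    show Nat.choose 6 3 = 20 from rfl, show Nat.choose 6 4 = 15 from rfl,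
    show Nat.choose 6 5 = 6 from rfl]
  ring

set_option maxHeartbeats 4000000 in
include hf0 h1 hf2 hf3 hf4 in
lemma coeffT2 :
    MvPowerSeries.coeff (R := ℚ) (Dm 2 4)
      (sub2 f 1 0 * sub2 f 1 1 * (sub2 f (-1) (-1) * sub2 f 0 (-1)))
      = (5/3) * fc 2 - (5/4) * (fc 1)^2 := by
  simp (config := { maxSteps := 10000000 }) only [coeff_mul_D, Finset.sum_range_succ,
    Finset.sum_range_zero, coeff_sub2, Nat.reduceSub, Nat.reduceAdd]
  norm_num [hf0, h1, hf2, hf3, hf4,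
    show Nat.choose 2 1 = 2 from rfl, show Nat.choose 3 1 = 3 from rfl,
    show Nat.choose 3 2 = 3 from rfl, show Nat.choose 4 1 = 4 from rfl,
    show Nat.choose 4 2 = 6 from rfl, show Nat.choose 4 3 = 4 from rfl,
    show Nat.choose 5 1 = 5 from rfl, show Nat.choose 5 2 = 10 from rfl,
    show Nat.choose 5 3 = 10 from rfl, show Nat.choose 5 4 = 5 from rfl,
    show Nat.choose 6 1 = 6 from rfl, show Nat.choose 6 2 = 15 from rfl,
    show Nat.choose 6 3 = 20 from rfl, show Nat.choose 6 4 = 15 from rfl,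
    show Nat.choose 6 5 = 6 from rfl]
  ring

set_option maxHeartbeats 4000000 in
include hf0 h1 hf2 hf3 hf4 in
lemma coeffT3 :
    MvPowerSeries.coeff (R := ℚ) (Dm 2 4)
      (sub2 f 1 0 * sub2 f 1 1 * (sub2 f (-1) 0 * sub2 f 0 1))
      = -(1/3) * fc 2 - (1/4) * (fc 1)^2 := by
  simp (config := { maxSteps := 10000000 }) only [coeff_mul_D, Finset.sum_range_succ,
    Finset.sum_range_zero, coeff_sub2, Nat.reduceSub, Nat.reduceAdd]
  norm_num [hf0, h1, hf2, hf3, hf4,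
    show Nat.choose 2 1 = 2 from rfl, show Nat.choose 3 1 = 3 from rfl,
    show Nat.choose 3 2 = 3 from rfl, show Nat.choose 4 1 = 4 from rfl,
    show Nat.choose 4 2 = 6 from rfl, show Nat.choose 4 3 = 4 from rfl,
    show Nat.choose 5 1 = 5 from rfl, show Nat.choose 5 2 = 10 from rfl,
    show Nat.choose 5 3 = 10 from rfl, show Nat.choose 5 4 = 5 from rfl,
    show Nat.choose 6 1 = 6 from rfl, show Nat.choose 6 2 = 15 from rfl,
    show Nat.choose 6 3 = 20 from rfl, show Nat.choose 6 4 = 15 from rfl,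
    show Nat.choose 6 5 = 6 from rfl]
  ring

set_option maxHeartbeats 4000000 in
include hf0 h1 hf2 hf3 hf4 in
lemma coeffT6 :
    MvPowerSeries.coeff (R := ℚ) (Dm 2 4)
      (sub2 f 1 0 * sub2 f 1 1 * (sub2 f (-1) 0 * sub2 f 0 1 * (sub2 f (-1) (-1) * sub2 f 0 (-1))))
      = -1 := by
  simp (config := { maxSteps := 10000000 }) only [coeff_mul_D, Finset.sum_range_succ,
    Finset.sum_range_zero, coeff_sub2, Nat.reduceSub, Nat.reduceAdd]
  norm_num [hf0, h1, hf2, hf3, hf4,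
    show Nat.choose 2 1 = 2 from rfl, show Nat.choose 3 1 = 3 from rfl,
    show Nat.choose 3 2 = 3 from rfl, show Nat.choose 4 1 = 4 from rfl,
    show Nat.choose 4 2 = 6 from rfl, show Nat.choose 4 3 = 4 from rfl,
    show Nat.choose 5 1 = 5 from rfl, show Nat.choose 5 2 = 10 from rfl,
    show Nat.choose 5 3 = 10 from rfl, show Nat.choose 5 4 = 5 from rfl,
    show Nat.choose 6 1 = 6 from rfl, show Nat.choose 6 2 = 15 from rfl,
    show Nat.choose 6 3 = 20 from rfl, show Nat.choose 6 4 = 15 from rfl,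
    show Nat.choose 6 5 = 6 from rfl]

end Coeffs

/-- If `q = 1/f` satisfies the two-variable functional equation with constant `C`,
then `2C = 3f₁² − f₂`. -/
theorem stmt_2 (f : PowerSeries ℚ) (C : ℚ) (fc : ℕ → ℚ)
    (h0 : PowerSeries.constantCoeff (R := ℚ) f = 0) (h1 : PowerSeries.coeff (R := ℚ) 1 f = 1)
    (hfc : ∀ k, 1 ≤ k → PowerSeries.coeff (R := ℚ) (k + 1) f = fc k / ((k + 1).factorial : ℚ))
    (heq : TwoVarEq f C) :
    2 * C = 3 * (fc 1) ^ 2 - fc 2 := by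
  classical
  have hf0 : PowerSeries.coeff (R := ℚ) 0 f = 0 := by
    rw [PowerSeries.coeff_zero_eq_constantCoeff]; exact h0
  have hf2 := hfc 1 le_rfl
  have hf3 := hfc 2 (by norm_num)
  have hf4 := hfc 3 (by norm_num)
  norm_num [Nat.factorial] at hf2 hf3 hf4
  set Mv := MvPowerSeries (Fin 2) ℚ
  set K := FractionRing Mv
  set alg := algebraMap Mv K with halg
  have hA : alg (sub2 f 1 0) ≠ 0 := by
    rw [map_ne_zero_iff alg (IsFractionRing.injective Mv K)]
    exact sub2_ne_zero f h1 1 0 (by norm_num)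
  have hB : alg (sub2 f 1 1) ≠ 0 := by
    rw [map_ne_zero_iff alg (IsFractionRing.injective Mv K)]
    exact sub2_ne_zero f h1 1 1 (by norm_num)
  have hA' : alg (sub2 f (-1) 0) ≠ 0 := by
    rw [map_ne_zero_iff alg (IsFractionRing.injective Mv K)]
    exact sub2_ne_zero f h1 (-1) 0 (by norm_num)
  have hB' : alg (sub2 f 0 1) ≠ 0 := by
    rw [map_ne_zero_iff alg (IsFractionRing.injective Mv K)]
    exact sub2_ne_zero f h1 0 1 (by norm_num)
  have hD : alg (sub2 f (-1) (-1)) ≠ 0 := by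
    rw [map_ne_zero_iff alg (IsFractionRing.injective Mv K)]
    exact sub2_ne_zero f h1 (-1) (-1) (by norm_num)
  have hE : alg (sub2 f 0 (-1)) ≠ 0 := by
    rw [map_ne_zero_iff alg (IsFractionRing.injective Mv K)]
    exact sub2_ne_zero f h1 0 (-1) (by norm_num)
  have hCcast : alg (algebraMap ℚ Mv C) = (C : K) := by
    have h := eq_ratCast ((algebraMap Mv K).comp (algebraMap ℚ Mv)) C
    rw [RingHom.comp_apply] at h
    exact h
  have heq' : (alg (sub2 f 1 0))⁻¹ * (alg (sub2 f 1 1))⁻¹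
      + (alg (sub2 f (-1) 0))⁻¹ * (alg (sub2 f 0 1))⁻¹
      + (alg (sub2 f (-1) (-1)))⁻¹ * (alg (sub2 f 0 (-1)))⁻¹ = (C : K) := heq
  have key : sub2 f (-1) 0 * sub2 f 0 1 * (sub2 f (-1) (-1) * sub2 f 0 (-1))
      + sub2 f 1 0 * sub2 f 1 1 * (sub2 f (-1) (-1) * sub2 f 0 (-1))
      + sub2 f 1 0 * sub2 f 1 1 * (sub2 f (-1) 0 * sub2 f 0 1)
      = C • (sub2 f 1 0 * sub2 f 1 1
          * (sub2 f (-1) 0 * sub2 f 0 1 * (sub2 f (-1) (-1) * sub2 f 0 (-1)))) := by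
    rw [Algebra.smul_def]
    apply IsFractionRing.injective Mv K
    rw [map_add, map_add, map_mul, map_mul, map_mul, map_mul, map_mul, map_mul, map_mul,
      map_mul, map_mul, map_mul, map_mul, hCcast, ← heq']
    simp only [← halg, map_mul]
    generalize alg (sub2 f 1 0) = a at hA ⊢
    generalize alg (sub2 f 1 1) = b at hB ⊢
    generalize alg (sub2 f (-1) 0) = c at hA' ⊢
    generalize alg (sub2 f 0 1) = d at hB' ⊢
    generalize alg (sub2 f (-1) (-1)) = e at hD ⊢
    generalize alg (sub2 f 0 (-1)) = e' at hE ⊢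
    linear_combination (-(c*d*e*e'*b*b⁻¹)) * mul_inv_cancel₀ hA + (-(c*d*e*e')) * mul_inv_cancel₀ hB
      + (-(a*b*e*e'*d*d⁻¹)) * mul_inv_cancel₀ hA' + (-(a*b*e*e')) * mul_inv_cancel₀ hB'
      + (-(a*b*c*d*e'*e'⁻¹)) * mul_inv_cancel₀ hD + (-(a*b*c*d)) * mul_inv_cancel₀ hE
  have hc := congrArg (MvPowerSeries.coeff (R := ℚ) (Dm 2 4)) key
  rw [map_add, map_add, MvPowerSeries.coeff_smul,
    coeffT1 f fc hf0 h1 hf2 hf3 hf4, coeffT2 f fc hf0 h1 hf2 hf3 hf4,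
    coeffT3 f fc hf0 h1 hf2 hf3 hf4, coeffT6 f fc hf0 h1 hf2 hf3 hf4] at hc
  linarith
end

section
/- If q(x) = 1/f(x) with f a formal power series f(x) = x + Σ fₖ x^{k+1}/(k+1)! satisfies the two-variable functional equation q(x)q(x+y) + q(−x)q(y) + q(−x−y)q(−y) = C, then q satisfies the one-variable functional-differential equation q(x)² − f₁ q(−x) + q'(−x) = C. -/
/-- Substitution `x ↦ -x` in a Laurent series. -/
noncomputable def negSub (q : LaurentSeries ℚ) : LaurentSeries ℚ :=
  { coeff := fun n => (-1 : ℚ) ^ n * q.coeff n,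
    isPWO_support' := q.isPWO_support'.mono (by
      intro n hn
      simp only [Function.mem_support] at hn ⊢
      intro h
      exact hn (by rw [h, mul_zero])) }

/-- `q = 1/f` as a Laurent series. -/
noncomputable def lq (f : PowerSeries ℚ) : LaurentSeries ℚ :=
  (HahnSeries.ofPowerSeries ℤ ℚ f)⁻¹

/-- Derivative of Laurent series. -/
noncomputable def lD : LaurentSeries ℚ → LaurentSeries ℚ := LaurentSeries.derivative ℚ

/-- The one-variable functional-differential equation
`q(x)² − f₁ q(−x) + q'(−x) = C` for `q = 1/f`. -/
def OneVarEq (f : PowerSeries ℚ) (f1 C : ℚ) : Prop :=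
  (lq f) ^ 2 - f1 • negSub (lq f) + negSub (lD (lq f)) = C • (1 : LaurentSeries ℚ)

/-! ### Auxiliary machinery -/

open Finset PowerSeries

noncomputable section Aux

/-! #### Slices of two-variable power series -/

def σi (m n : ℕ) : Fin 2 →₀ ℕ := Finsupp.single 0 m + Finsupp.single 1 n

lemma σi_apply0 (m n : ℕ) : σi m n 0 = m := by simp [σi]
lemma σi_apply1 (m n : ℕ) : σi m n 1 = n := by simp [σi]

lemma σi_eta (d : Fin 2 →₀ ℕ) : σi (d 0) (d 1) = d := by
  ext i
  fin_cases i
  · simp [σi]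
  · simp [σi]

def sl (n : ℕ) (g : MvPowerSeries (Fin 2) ℚ) : PowerSeries ℚ :=
  PowerSeries.mk fun m => MvPowerSeries.coeff (σi m n) g

lemma sl_mul (n : ℕ) (G H : MvPowerSeries (Fin 2) ℚ) :
    sl n (G * H) = ∑ p ∈ Finset.HasAntidiagonal.antidiagonal n, sl p.1 G * sl p.2 H := by
  ext m
  simp only [sl, PowerSeries.coeff_mk]
  rw [MvPowerSeries.coeff_mul]
  rw [map_sum]
  have : ∀ p ∈ Finset.HasAntidiagonal.antidiagonal n,
      (PowerSeries.coeff m) (sl p.1 G * sl p.2 H) =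
        ∑ q ∈ Finset.HasAntidiagonal.antidiagonal m,
          MvPowerSeries.coeff (σi q.1 p.1) G * MvPowerSeries.coeff (σi q.2 p.2) H := by
    intro p _
    rw [PowerSeries.coeff_mul]
    exact Finset.sum_congr rfl fun q _ => by simp only [sl, PowerSeries.coeff_mk]
  simp only [sl] at this
  rw [Finset.sum_congr rfl this, ← Finset.sum_product']
  refine Finset.sum_nbij' (fun P => ((P.1 1, P.2 1), (P.1 0, P.2 0)))
    (fun r => (σi r.2.1 r.1.1, σi r.2.2 r.1.2)) ?_ ?_ ?_ ?_ ?_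
  · intro P hP
    rw [Finset.HasAntidiagonal.mem_antidiagonal] at hP
    have h0 : P.1 0 + P.2 0 = m := by
      have := congrArg (fun d => d 0) hP; simpa [σi_apply0] using this
    have h1 : P.1 1 + P.2 1 = n := by
      have := congrArg (fun d => d 1) hP; simpa [σi_apply1] using this
    simp [Finset.mem_product, Finset.HasAntidiagonal.mem_antidiagonal, h0, h1]
  · intro r hr
    simp only [Finset.mem_product, Finset.HasAntidiagonal.mem_antidiagonal] at hr
    rw [Finset.HasAntidiagonal.mem_antidiagonal]
    show σi r.2.1 r.1.1 + σi r.2.2 r.1.2 = σi m n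
    ext i
    fin_cases i <;> simp [σi, hr.1, hr.2]
  · intro P hP
    show (σi (P.1 0) (P.1 1), σi (P.2 0) (P.2 1)) = P
    rw [σi_eta, σi_eta]
  · intro r hr
    show ((σi r.2.1 r.1.1 1, σi r.2.2 r.1.2 1), σi r.2.1 r.1.1 0, σi r.2.2 r.1.2 0) = r
    simp [σi_apply0, σi_apply1]
  · intro P hP
    show _ = (MvPowerSeries.coeff (σi (P.1 0) (P.1 1))) G *
        (MvPowerSeries.coeff (σi (P.2 0) (P.2 1))) H
    rw [σi_eta, σi_eta]

lemma sl_mul0 (G H : MvPowerSeries (Fin 2) ℚ) : sl 0 (G * H) = sl 0 G * sl 0 H := by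
  rw [sl_mul]; simp

lemma sl_mul1 (G H : MvPowerSeries (Fin 2) ℚ) :
    sl 1 (G * H) = sl 0 G * sl 1 H + sl 1 G * sl 0 H := by
  rw [sl_mul, Finset.Nat.sum_antidiagonal_eq_sum_range_succ_mk]
  simp [Finset.sum_range_succ]

lemma sl_mul2 (G H : MvPowerSeries (Fin 2) ℚ) :
    sl 2 (G * H) = sl 0 G * sl 2 H + sl 1 G * sl 1 H + sl 2 G * sl 0 H := by
  rw [sl_mul, Finset.Nat.sum_antidiagonal_eq_sum_range_succ_mk]
  simp [Finset.sum_range_succ]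

lemma sl_add (n : ℕ) (G H : MvPowerSeries (Fin 2) ℚ) : sl n (G + H) = sl n G + sl n H := by
  ext m; simp [sl]

lemma sl_C_mul (n : ℕ) (r : ℚ) (G : MvPowerSeries (Fin 2) ℚ) :
    sl n (MvPowerSeries.C r * G) = PowerSeries.C r * sl n G := by
  ext m; simp [sl, MvPowerSeries.coeff_C_mul, PowerSeries.coeff_C_mul]

lemma sl_sub2 (f : PowerSeries ℚ) (s t : ℚ) (n m : ℕ) :
    PowerSeries.coeff m (sl n (sub2 f s t)) =
      PowerSeries.coeff (m + n) f * ((m + n).choose m) * s ^ m * t ^ n := by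
  rw [sl, PowerSeries.coeff_mk, MvPowerSeries.coeff_apply, sub2, σi_apply0, σi_apply1]

variable (f : PowerSeries ℚ)

lemma sl_a0 : sl 0 (sub2 f 1 0) = f := by
  ext m; rw [sl_sub2]; simp

lemma sl_a1 : sl 1 (sub2 f 1 0) = 0 := by
  ext m; rw [sl_sub2]; simp

lemma sl_a2 : sl 2 (sub2 f 1 0) = 0 := by
  ext m; rw [sl_sub2]; simp

lemma sl_b0 : sl 0 (sub2 f 1 1) = f := by
  ext m; rw [sl_sub2]; simp

lemma sl_b1 : sl 1 (sub2 f 1 1) = d⁄dX ℚ f := by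
  ext m; rw [sl_sub2, PowerSeries.coeff_derivative]
  simp [Nat.choose_succ_self_right]

lemma sl_c0 : sl 0 (sub2 f (-1) 0) = rescale (-1) f := by
  ext m; rw [sl_sub2, PowerSeries.coeff_rescale]; simp; ring

lemma sl_c1 : sl 1 (sub2 f (-1) 0) = 0 := by
  ext m; rw [sl_sub2]; simp

lemma sl_c2 : sl 2 (sub2 f (-1) 0) = 0 := by
  ext m; rw [sl_sub2]; simp

lemma sl_d (n : ℕ) : sl n (sub2 f 0 1) = PowerSeries.C (PowerSeries.coeff n f) := by
  ext m; rw [sl_sub2, PowerSeries.coeff_C]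
  rcases Nat.eq_zero_or_pos m with h | h
  · simp [h]
  · rw [if_neg (by omega), zero_pow (by omega)]; ring

lemma sl_g (n : ℕ) : sl n (sub2 f 0 (-1)) =
    PowerSeries.C ((-1) ^ n * PowerSeries.coeff n f) := by
  ext m; rw [sl_sub2, PowerSeries.coeff_C]
  rcases Nat.eq_zero_or_pos m with h | h
  · simp [h]; ring
  · rw [if_neg (by omega), zero_pow (by omega)]; ring

lemma sl_e0 : sl 0 (sub2 f (-1) (-1)) = rescale (-1) f := by
  ext m; rw [sl_sub2, PowerSeries.coeff_rescale]; simp; ring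

lemma sl_e1 : sl 1 (sub2 f (-1) (-1)) = -(rescale (-1) (d⁄dX ℚ f)) := by
  ext m
  rw [sl_sub2, map_neg, PowerSeries.coeff_rescale, PowerSeries.coeff_derivative]
  simp [Nat.choose_succ_self_right]
  ring

/-! #### Nonvanishing of the substituted series -/

lemma sub2_ne_zero_left (s t : ℚ) (h1 : PowerSeries.coeff 1 f = 1)
    (hs : s ≠ 0) : sub2 f s t ≠ 0 := by
  intro h
  have := congrFun h (σi 1 0)
  rw [sub2] at this
  simp only [σi_apply0, σi_apply1] at this
  simp [h1] at this
  exact hs this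

lemma sub2_ne_zero_right (s t : ℚ) (h1 : PowerSeries.coeff 1 f = 1)
    (ht : t ≠ 0) : sub2 f s t ≠ 0 := by
  intro h
  have := congrFun h (σi 0 1)
  rw [sub2] at this
  simp only [σi_apply0, σi_apply1] at this
  simp [h1] at this
  exact ht this

/-! #### Clearing denominators in the two-variable equation -/

lemma key_identity (C : ℚ) (h1 : PowerSeries.coeff 1 f = 1)
    (heq : TwoVarEq f C) :
    sub2 f (-1) 0 * sub2 f 0 1 * (sub2 f (-1) (-1) * sub2 f 0 (-1)) +
      sub2 f 1 0 * sub2 f 1 1 * (sub2 f (-1) (-1) * sub2 f 0 (-1)) +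
      sub2 f 1 0 * sub2 f 1 1 * (sub2 f (-1) 0 * sub2 f 0 1) =
    MvPowerSeries.C C *
      (sub2 f 1 0 * sub2 f 1 1 * (sub2 f (-1) 0 * sub2 f 0 1 *
        (sub2 f (-1) (-1) * sub2 f 0 (-1)))) := by
  set R := MvPowerSeries (Fin 2) ℚ
  set K := FractionRing R
  set φ := algebraMap R K with hφ
  have hinj : Function.Injective φ := IsFractionRing.injective R K
  have ha : sub2 f 1 0 ≠ 0 := sub2_ne_zero_left f _ _ h1 one_ne_zero
  have hb : sub2 f 1 1 ≠ 0 := sub2_ne_zero_left f _ _ h1 one_ne_zero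
  have hc : sub2 f (-1) 0 ≠ 0 := sub2_ne_zero_left f _ _ h1 (by norm_num)
  have hd : sub2 f 0 1 ≠ 0 := sub2_ne_zero_right f _ _ h1 one_ne_zero
  have he : sub2 f (-1) (-1) ≠ 0 := sub2_ne_zero_left f _ _ h1 (by norm_num)
  have hg : sub2 f 0 (-1) ≠ 0 := sub2_ne_zero_right f _ _ h1 (by norm_num)
  have hA : φ (sub2 f 1 0) ≠ 0 := (map_ne_zero_iff φ hinj).mpr ha
  have hB : φ (sub2 f 1 1) ≠ 0 := (map_ne_zero_iff φ hinj).mpr hb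
  have hC' : φ (sub2 f (-1) 0) ≠ 0 := (map_ne_zero_iff φ hinj).mpr hc
  have hD : φ (sub2 f 0 1) ≠ 0 := (map_ne_zero_iff φ hinj).mpr hd
  have hE : φ (sub2 f (-1) (-1)) ≠ 0 := (map_ne_zero_iff φ hinj).mpr he
  have hG : φ (sub2 f 0 (-1)) ≠ 0 := (map_ne_zero_iff φ hinj).mpr hg
  have hcast : (C : K) = φ (MvPowerSeries.C C) := by
    have := eq_ratCast (φ.comp (MvPowerSeries.C (σ := Fin 2) (R := ℚ))) C
    simp only [RingHom.comp_apply] at this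
    exact this.symm
  unfold TwoVarEq qv at heq
  rw [← hφ] at heq
  rw [hcast] at heq
  apply hinj
  push_cast [map_add, map_mul]
  field_simp at heq
  linear_combination heq

/-! #### Part 1: the coefficient of `y²` -/

lemma part1 (C : ℚ) (fc : ℕ → ℚ)
    (h0 : PowerSeries.constantCoeff f = 0) (h1 : PowerSeries.coeff 1 f = 1)
    (hfc : ∀ k, 1 ≤ k → PowerSeries.coeff (k + 1) f = fc k / ((k + 1).factorial : ℚ))
    (heq : TwoVarEq f C) :
    (rescale (-1) f) ^ 2 - PowerSeries.C (fc 1) * (f ^ 2 * rescale (-1) f)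
        - f ^ 2 * rescale (-1) (d⁄dX ℚ f)
      = PowerSeries.C C * (f ^ 2 * (rescale (-1) f) ^ 2) := by
  have h0' : PowerSeries.coeff 0 f = 0 := by rw [PowerSeries.coeff_zero_eq_constantCoeff, h0]
  have hf2 : PowerSeries.C (fc 1) = 2 * PowerSeries.C (PowerSeries.coeff 2 f) := by
    have := hfc 1 le_rfl
    norm_num at this
    rw [this, (map_ofNat (PowerSeries.C (R := ℚ)) 2).symm, ← map_mul]
    congr 1
    ring
  have key := key_identity f C h1 heq
  have E := congrArg (sl 2) key
  have hC1 : PowerSeries.C (-1 : ℚ) = -1 := by simp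
  simp only [sl_add, sl_C_mul, sl_mul2, sl_mul1, sl_mul0, sl_a0, sl_a1, sl_a2, sl_b0, sl_b1,
    sl_c0, sl_c1, sl_c2, sl_d, sl_e0, sl_e1, sl_g, h0', h1, map_zero, map_one, pow_zero,
    pow_one, one_mul, mul_zero, zero_mul, mul_one, add_zero, zero_add, neg_mul, mul_neg,
    neg_one_sq, hC1] at E
  rw [hf2]
  linear_combination -E

/-! #### Laurent series helpers -/

abbrev OP : PowerSeries ℚ →+* LaurentSeries ℚ := HahnSeries.ofPowerSeries ℤ ℚ

lemma negSub_coeff (q : LaurentSeries ℚ) (n : ℤ) :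
    (negSub q).coeff n = (-1 : ℚ) ^ n * q.coeff n := rfl

lemma OP_coeff_neg (p : PowerSeries ℚ) (n : ℤ) (h : n < 0) : (OP p).coeff n = 0 := by
  rw [HahnSeries.ofPowerSeries_apply]
  apply HahnSeries.embDomain_notin_range
  rintro ⟨k, hk⟩
  have : (k : ℤ) = n := hk
  omega

lemma single_OP_coeff (a : ℤ) (r : ℚ) (p : PowerSeries ℚ) (n : ℤ) :
    (HahnSeries.single a r * OP p).coeff n =
      if 0 ≤ n - a then r * PowerSeries.coeff (n - a).toNat p else 0 := by
  have h : (HahnSeries.single a r * OP p).coeff ((n - a) + a) = r * (OP p).coeff (n - a) :=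
    HahnSeries.coeff_single_mul_add (Γ := ℤ) (R := ℚ) (r := r) (x := OP p) (a := n - a) (b := a)
  rw [show (n - a) + a = n by ring] at h
  rw [h]
  split_ifs with hn
  · rw [← Int.toNat_of_nonneg hn, HahnSeries.ofPowerSeries_apply_coeff, Int.toNat_natCast]
  · rw [OP_coeff_neg _ _ (by omega), mul_zero]

lemma negSub_single_OP (a : ℤ) (p : PowerSeries ℚ) :
    negSub (HahnSeries.single a 1 * OP p) =
      HahnSeries.single a ((-1 : ℚ) ^ a) * OP (rescale (-1) p) := by
  ext n
  rw [negSub_coeff, single_OP_coeff, single_OP_coeff]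
  split_ifs with hn
  · rw [one_mul, coeff_rescale]
    have hk : n = a + ((n - a).toNat : ℤ) := by omega
    rw [show ((-1 : ℚ) ^ n) = (-1 : ℚ) ^ (a + ((n - a).toNat : ℤ)) by rw [← hk],
      zpow_add₀ (by norm_num : (-1 : ℚ) ≠ 0), zpow_natCast]
    ring
  · rw [mul_zero]

lemma coeff_XD_sub (p : ℚ⟦X⟧) (k : ℕ) :
    PowerSeries.coeff k (X * d⁄dX ℚ p - p) = ((k : ℚ) - 1) * PowerSeries.coeff k p := by
  rw [map_sub]
  cases k with
  | zero => rw [coeff_zero_X_mul]; push_cast; ring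
  | succ j =>
      rw [coeff_succ_X_mul, PowerSeries.coeff_derivative]
      push_cast; ring

lemma lD_single_OP (p : ℚ⟦X⟧) :
    lD (HahnSeries.single (-1 : ℤ) 1 * OP p) =
      HahnSeries.single (-2 : ℤ) 1 * OP (X * d⁄dX ℚ p - p) := by
  ext n
  rw [lD, LaurentSeries.derivative_apply, LaurentSeries.hasseDeriv_coeff, single_OP_coeff,
    single_OP_coeff, Ring.choose_one_right]
  rw [show n + (1 : ℕ) - (-1 : ℤ) = n + 2 by push_cast; ring,
    show n - (-2 : ℤ) = n + 2 by ring]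
  split_ifs with h
  · rw [one_mul, one_mul, coeff_XD_sub]
    have hk : (((n + 2).toNat : ℤ)) = n + 2 := Int.toNat_of_nonneg h
    rw [show n + (1 : ℕ) = n + 1 by push_cast; ring]
    rw [zsmul_eq_mul]
    have : (((n + 2).toNat : ℚ)) - 1 = ((n + 1 : ℤ) : ℚ) := by
      have h2 : (((n + 2).toNat : ℚ)) = ((n : ℚ) + 2) := by
        exact_mod_cast congrArg (Int.cast : ℤ → ℚ) hk
      rw [h2]; push_cast; ring
    rw [this]
  · rw [smul_zero]

end Aux

/-- The two-variable functional equation implies the one-variable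
functional-differential equation `q(x)² − f₁ q(−x) + q'(−x) = C`. -/
theorem stmt_3 (f : PowerSeries ℚ) (C : ℚ) (fc : ℕ → ℚ)
    (h0 : PowerSeries.constantCoeff (R := ℚ) f = 0) (h1 : PowerSeries.coeff (R := ℚ) 1 f = 1)
    (hfc : ∀ k, 1 ≤ k → PowerSeries.coeff (R := ℚ) (k + 1) f = fc k / ((k + 1).factorial : ℚ))
    (heq : TwoVarEq f C) :
    OneVarEq f (fc 1) C := by
  classical
  -- the unit part `u` of `f = X·u` and its inverse `v`
  set u : ℚ⟦X⟧ := PowerSeries.mk fun n => PowerSeries.coeff (n + 1) f with hu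
  have hu0 : PowerSeries.constantCoeff u = 1 := by
    rw [← PowerSeries.coeff_zero_eq_constantCoeff]
    simp [hu, h1]
  have hfXu : f = X * u := by
    ext m
    cases m with
    | zero =>
        rw [coeff_zero_X_mul, PowerSeries.coeff_zero_eq_constantCoeff, h0]
    | succ j => rw [coeff_succ_X_mul]; simp [hu]
  set v : ℚ⟦X⟧ := u.invOfUnit 1 with hv
  have huv : u * v = 1 := PowerSeries.mul_invOfUnit u 1 (by rw [hu0]; rfl)
  set ru : ℚ⟦X⟧ := rescale (-1) u with hru
  set rv : ℚ⟦X⟧ := rescale (-1) v with hrv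
  have hruv : ru * rv = 1 := by rw [hru, hrv, ← map_mul, huv, map_one]
  -- derivative identities
  have hDf : d⁄dX ℚ f = u + X * d⁄dX ℚ u := by
    rw [hfXu, Derivation.leibniz]
    simp only [smul_eq_mul, PowerSeries.derivative_X]
    ring
  have hduv : u * d⁄dX ℚ v + v * d⁄dX ℚ u = 0 := by
    have h := congrArg (d⁄dX ℚ) huv
    rw [Derivation.leibniz, Derivation.map_one_eq_zero] at h
    simpa [smul_eq_mul] using h
  have hXvd : X * d⁄dX ℚ v - v = -(d⁄dX ℚ f * v ^ 2) := by
    rw [hDf]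
    linear_combination (X * v) * hduv + (v - X * d⁄dX ℚ v) * huv
  -- rescale facts
  have hrX : rescale (-1) (X : ℚ⟦X⟧) = -X := by
    ext n
    rw [coeff_rescale, map_neg, PowerSeries.coeff_X]
    split_ifs with h
    · rw [h]; norm_num
    · ring
  -- Part 1 and reduction to single-variable power series identity E2
  have E := part1 f C fc h0 h1 hfc heq
  set Dq : ℚ⟦X⟧ := d⁄dX ℚ f with hDq
  set ND : ℚ⟦X⟧ := rescale (-1) Dq with hND
  set N : ℚ⟦X⟧ := rescale (-1) f with hNdef
  have hN : N = -(X * ru) := by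
    rw [hNdef, hfXu, map_mul, hrX, hru]
    ring
  have hX2 : (X : ℚ⟦X⟧) ^ 2 ≠ 0 := pow_ne_zero _ PowerSeries.X_ne_zero
  have E2 : ru ^ 2 + PowerSeries.C (fc 1) * (X * (u ^ 2 * ru)) - u ^ 2 * ND
      = PowerSeries.C C * (X ^ 2 * (u ^ 2 * ru ^ 2)) := by
    apply mul_left_cancel₀ hX2
    rw [hN, hfXu] at E
    linear_combination E
  -- the single-variable identity satisfied by v
  have hune : u ≠ 0 := fun h => by rw [h] at hu0; simp at hu0
  have hrune : ru ≠ 0 := fun h => by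
    have := congrArg (PowerSeries.constantCoeff (R := ℚ)) h
    rw [hru, ← PowerSeries.coeff_zero_eq_constantCoeff] at this
    rw [coeff_rescale] at this
    simp [PowerSeries.coeff_zero_eq_constantCoeff, hu0] at this
  have PID : v ^ 2 - -(PowerSeries.C (fc 1) * (X * rv)) + -(ND * rv ^ 2)
      = PowerSeries.C C * X ^ 2 := by
    have hne : u ^ 2 * ru ^ 2 ≠ 0 := mul_ne_zero (pow_ne_zero _ hune) (pow_ne_zero _ hrune)
    apply mul_left_cancel₀ hne
    linear_combination E2 + ru ^ 2 * (u * v + 1) * huv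
      + (PowerSeries.C (fc 1) * X * u ^ 2 * ru - u ^ 2 * ND * (ru * rv + 1)) * hruv
  -- Laurent series representations
  have hsq : (HahnSeries.single (-1 : ℤ) (1 : ℚ)) ^ 2 = HahnSeries.single (-2 : ℤ) 1 := by
    rw [sq, HahnSeries.single_mul_single]
    norm_num
  have hlq : lq f = HahnSeries.single (-1 : ℤ) 1 * OP v := by
    rw [lq]
    apply inv_eq_of_mul_eq_one_right
    rw [hfXu, map_mul, HahnSeries.ofPowerSeries_X]
    rw [show (HahnSeries.single (1 : ℤ) (1 : ℚ)) * OP u *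
        (HahnSeries.single (-1 : ℤ) 1 * OP v) =
        (HahnSeries.single (1 : ℤ) (1 : ℚ)) * HahnSeries.single (-1 : ℤ) 1 * (OP u * OP v) by
      ring]
    rw [HahnSeries.single_mul_single, ← map_mul, huv, map_one, mul_one]
    norm_num [HahnSeries.single_zero_one]
  have rep1 : lq f ^ 2 = HahnSeries.single (-2 : ℤ) 1 * OP (v ^ 2) := by
    rw [hlq, mul_pow, hsq, ← map_pow]
  have rep2 : negSub (lq f) = HahnSeries.single (-1 : ℤ) (-1 : ℚ) * OP rv := by
    rw [hlq, negSub_single_OP, hrv]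
    norm_num
  have rep3 : negSub (lD (lq f)) =
      HahnSeries.single (-2 : ℤ) 1 * OP (rescale (-1) (X * d⁄dX ℚ v - v)) := by
    rw [hlq, lD_single_OP, negSub_single_OP]
    norm_num
  have hw : rescale (-1) (X * d⁄dX ℚ v - v) = -(ND * rv ^ 2) := by
    rw [hXvd, map_neg, map_mul, map_pow, ← hND, ← hrv]
  -- reassembling the goal
  rw [OneVarEq, rep1, rep2, rep3, hw]
  have ht2 : (fc 1) • (HahnSeries.single (-1 : ℤ) (-1 : ℚ) * OP rv)
      = HahnSeries.single (-2 : ℤ) 1 * OP (-(PowerSeries.C (fc 1) * (X * rv))) := by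
    ext n
    rw [HahnSeries.coeff_smul, single_OP_coeff, single_OP_coeff]
    rw [show n - (-1 : ℤ) = n + 1 by ring, show n - (-2 : ℤ) = n + 2 by ring]
    by_cases h1' : 0 ≤ n + 1
    · rw [if_pos h1', if_pos (by omega), one_mul, map_neg, PowerSeries.coeff_C_mul]
      have hk2 : (n + 2).toNat = (n + 1).toNat + 1 := by omega
      rw [hk2, coeff_succ_X_mul, smul_eq_mul]
      ring
    · rw [if_neg h1', smul_zero]
      by_cases h2' : 0 ≤ n + 2
      · rw [if_pos h2', one_mul, map_neg, PowerSeries.coeff_C_mul]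
        have hk0 : (n + 2).toNat = 0 := by omega
        rw [hk0, coeff_zero_X_mul]
        simp
      · rw [if_neg h2']
  have ht4 : (C : ℚ) • (1 : LaurentSeries ℚ)
      = HahnSeries.single (-2 : ℤ) 1 * OP (PowerSeries.C C * X ^ 2) := by
    ext n
    rw [HahnSeries.coeff_smul, single_OP_coeff]
    rw [show n - (-2 : ℤ) = n + 2 by ring]
    rw [← HahnSeries.single_zero_one (Γ := ℤ) (R := ℚ), HahnSeries.coeff_single]
    by_cases h2' : 0 ≤ n + 2
    · rw [if_pos h2', one_mul, PowerSeries.coeff_C_mul, PowerSeries.coeff_X_pow]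
      have : ((n + 2).toNat = 2) ↔ (n = 0) := by omega
      by_cases h0' : n = 0
      · rw [if_pos (this.mpr h0'), if_pos h0']
        simp [smul_eq_mul]
      · rw [if_neg (fun hh => h0' (this.mp hh)), if_neg h0']
        simp
    · rw [if_neg h2', if_neg (by omega)]
      simp
  rw [ht2, ht4]
  rw [show HahnSeries.single (-2 : ℤ) (1 : ℚ) * OP (v ^ 2)
      - HahnSeries.single (-2 : ℤ) 1 * OP (-(PowerSeries.C (fc 1) * (X * rv)))
      + HahnSeries.single (-2 : ℤ) 1 * OP (-(ND * rv ^ 2))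
      = HahnSeries.single (-2 : ℤ) 1 *
        (OP (v ^ 2) - OP (-(PowerSeries.C (fc 1) * (X * rv))) + OP (-(ND * rv ^ 2))) by ring]
  rw [← map_sub, ← map_add, PID]
end

section
/- If q = 1/f satisfies the functional equation q(x)q(x+y) + q(−x)q(y) + q(−x−y)q(−y) = C with f(x) = x + Σ fₖ x^{k+1}/(k+1)!, then f₄ = 15f₁⁴ − 25f₁²f₂ + 7f₁f₃ + 4f₂². -/
/- ========== auxiliary development ========== -/

private lemma cmul (X Y : PowerSeries ℚ) (n : ℕ) :
    PowerSeries.coeff (R := ℚ) n (X * Y)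
      = ∑ k ∈ Finset.range (n + 1),
          PowerSeries.coeff (R := ℚ) k X * PowerSeries.coeff (R := ℚ) (n - k) Y := by
  rw [PowerSeries.coeff_mul, Finset.Nat.sum_antidiagonal_eq_sum_range_succ_mk]

/-- the exponent vector `(a, b)` as a `Fin 2 →₀ ℕ`. -/
private noncomputable def s2v (p : ℕ × ℕ) : Fin 2 →₀ ℕ := Finsupp.single 0 p.1 + Finsupp.single 1 p.2

private lemma s2v_apply0 (p : ℕ × ℕ) : s2v p 0 = p.1 := by
  simp [s2v, Finsupp.single_apply]

private lemma s2v_apply1 (p : ℕ × ℕ) : s2v p 1 = p.2 := by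
  simp [s2v, Finsupp.single_apply]

private lemma s2v_eq (d : Fin 2 →₀ ℕ) : s2v (d 0, d 1) = d := by
  ext i
  fin_cases i
  · exact s2v_apply0 _
  · exact s2v_apply1 _

private lemma s2v_add (a b : ℕ × ℕ) : s2v (a.1 + b.1, a.2 + b.2) = s2v a + s2v b := by
  simp only [s2v, Finsupp.single_add]
  abel

private lemma s2v_eq_zero {p : ℕ × ℕ} (h : s2v p = 0) : p.1 = 0 ∧ p.2 = 0 := by
  constructor
  · rw [← s2v_apply0 p, h]; rfl
  · rw [← s2v_apply1 p, h]; rfl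

/-- "substitute `y := x`": sum of coefficients along total degree. -/
private noncomputable def diagFun (F : MvPowerSeries (Fin 2) ℚ) : PowerSeries ℚ :=
  PowerSeries.mk fun n => ∑ p ∈ Finset.HasAntidiagonal.antidiagonal n, MvPowerSeries.coeff (R := ℚ) (s2v p) F

private lemma diag_coeff_mul (F G : MvPowerSeries (Fin 2) ℚ) (p : ℕ × ℕ) :
    MvPowerSeries.coeff (R := ℚ) (s2v p) (F * G)
      = ∑ ru ∈ Finset.HasAntidiagonal.antidiagonal p.1 ×ˢ Finset.HasAntidiagonal.antidiagonal p.2,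
          MvPowerSeries.coeff (R := ℚ) (s2v (ru.1.1, ru.2.1)) F *
            MvPowerSeries.coeff (R := ℚ) (s2v (ru.1.2, ru.2.2)) G := by
  classical
  rw [MvPowerSeries.coeff_mul]
  refine Finset.sum_nbij' (i := fun w => ((w.1 0, w.2 0), (w.1 1, w.2 1)))
    (j := fun ru => (s2v (ru.1.1, ru.2.1), s2v (ru.1.2, ru.2.2))) ?_ ?_ ?_ ?_ ?_
  · intro w hw
    rw [Finset.HasAntidiagonal.mem_antidiagonal] at hw
    have h0 := DFunLike.congr_fun hw 0
    have h1 := DFunLike.congr_fun hw 1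
    simp only [Finsupp.add_apply, s2v_apply0, s2v_apply1] at h0 h1
    simp [Finset.mem_product, Finset.HasAntidiagonal.mem_antidiagonal, h0, h1]
  · intro ru hru
    simp only [Finset.mem_product, Finset.HasAntidiagonal.mem_antidiagonal] at hru
    rw [Finset.HasAntidiagonal.mem_antidiagonal, ← s2v_add]
    exact congrArg s2v (Prod.ext_iff.mpr ⟨hru.1, hru.2⟩)
  · intro w hw
    simp only [s2v_eq]
  · intro ru hru
    simp only [s2v_apply0, s2v_apply1]
  · intro w hw
    simp only [s2v_eq]

private lemma diag_map_mul (F G : MvPowerSeries (Fin 2) ℚ) :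
    diagFun (F * G) = diagFun F * diagFun G := by
  ext n
  rw [PowerSeries.coeff_mul]
  simp only [diagFun, PowerSeries.coeff_mk]
  calc ∑ p ∈ Finset.HasAntidiagonal.antidiagonal n, MvPowerSeries.coeff (R := ℚ) (s2v p) (F * G)
      = ∑ p ∈ Finset.HasAntidiagonal.antidiagonal n,
          ∑ ru ∈ Finset.HasAntidiagonal.antidiagonal p.1 ×ˢ Finset.HasAntidiagonal.antidiagonal p.2,
            MvPowerSeries.coeff (R := ℚ) (s2v (ru.1.1, ru.2.1)) F *
              MvPowerSeries.coeff (R := ℚ) (s2v (ru.1.2, ru.2.2)) G := by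
        exact Finset.sum_congr rfl fun p _ => diag_coeff_mul F G p
    _ = ∑ q ∈ Finset.HasAntidiagonal.antidiagonal n,
          ∑ ab ∈ Finset.HasAntidiagonal.antidiagonal q.1 ×ˢ Finset.HasAntidiagonal.antidiagonal q.2,
            MvPowerSeries.coeff (R := ℚ) (s2v ab.1) F * MvPowerSeries.coeff (R := ℚ) (s2v ab.2) G := by
        rw [Finset.sum_sigma', Finset.sum_sigma']
        refine Finset.sum_nbij'
          (i := fun z => ⟨(z.2.1.1 + z.2.2.1, z.2.1.2 + z.2.2.2), ((z.2.1.1, z.2.2.1), (z.2.1.2, z.2.2.2))⟩)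
          (j := fun z => ⟨(z.2.1.1 + z.2.2.1, z.2.1.2 + z.2.2.2), ((z.2.1.1, z.2.2.1), (z.2.1.2, z.2.2.2))⟩)
          ?_ ?_ ?_ ?_ ?_
        · rintro ⟨⟨a, b⟩, ⟨⟨c, d⟩, ⟨e, g⟩⟩⟩ hz
          simp [Finset.mem_sigma, Finset.mem_product] at hz ⊢
          omega
        · rintro ⟨⟨a, b⟩, ⟨⟨c, d⟩, ⟨e, g⟩⟩⟩ hz
          simp [Finset.mem_sigma, Finset.mem_product] at hz ⊢
          omega
        · rintro ⟨⟨a, b⟩, ⟨⟨c, d⟩, ⟨e, g⟩⟩⟩ hz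
          simp [Finset.mem_sigma, Finset.mem_product] at hz
          obtain ⟨h1, h2, h3⟩ := hz
          subst h2 h3
          rfl
        · rintro ⟨⟨a, b⟩, ⟨⟨c, d⟩, ⟨e, g⟩⟩⟩ hz
          simp [Finset.mem_sigma, Finset.mem_product] at hz
          obtain ⟨h1, h2, h3⟩ := hz
          subst h2 h3
          rfl
        · intro z hz
          rfl
    _ = ∑ q ∈ Finset.HasAntidiagonal.antidiagonal n,
          (∑ a ∈ Finset.HasAntidiagonal.antidiagonal q.1, MvPowerSeries.coeff (R := ℚ) (s2v a) F) *
            (∑ b ∈ Finset.HasAntidiagonal.antidiagonal q.2, MvPowerSeries.coeff (R := ℚ) (s2v b) G) := by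
        refine Finset.sum_congr rfl fun q _ => ?_
        rw [Finset.sum_mul_sum, ← Finset.sum_product']

/-- the diagonal substitution as a ring hom. -/
private noncomputable def diag : MvPowerSeries (Fin 2) ℚ →+* PowerSeries ℚ where
  toFun := diagFun
  map_one' := by
    classical
    ext n
    simp only [diagFun, PowerSeries.coeff_mk, PowerSeries.coeff_one, MvPowerSeries.coeff_one]
    cases n with
    | zero =>
      rw [if_pos rfl, Finset.Nat.antidiagonal_zero, Finset.sum_singleton,
        if_pos (by simp [s2v])]
    | succ m =>
      rw [if_neg (Nat.succ_ne_zero m)]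
      refine Finset.sum_eq_zero fun p hp => ?_
      rw [Finset.HasAntidiagonal.mem_antidiagonal] at hp
      rw [if_neg]
      intro h
      obtain ⟨h0, h1⟩ := s2v_eq_zero h
      omega
  map_mul' := diag_map_mul
  map_zero' := by
    ext n
    simp [diagFun]
  map_add' := by
    intro F G
    ext n
    simp [diagFun, Finset.sum_add_distrib]

private lemma diag_C (c : ℚ) :
    diag (MvPowerSeries.C (σ := Fin 2) (R := ℚ) c) = PowerSeries.C (R := ℚ) c := by
  classical
  ext n
  simp only [diag, RingHom.coe_mk, MonoidHom.coe_mk, OneHom.coe_mk, diagFun,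
    PowerSeries.coeff_mk, MvPowerSeries.coeff_C, PowerSeries.coeff_C]
  cases n with
  | zero =>
    rw [if_pos rfl, Finset.Nat.antidiagonal_zero, Finset.sum_singleton,
      if_pos (by simp [s2v])]
  | succ m =>
    rw [if_neg (Nat.succ_ne_zero m)]
    refine Finset.sum_eq_zero fun p hp => ?_
    rw [Finset.HasAntidiagonal.mem_antidiagonal] at hp
    rw [if_neg]
    intro h
    obtain ⟨h0, h1⟩ := s2v_eq_zero h
    omega

private lemma diag_sub2 (f : PowerSeries ℚ) (s t : ℚ) :
    diag (sub2 f s t) = PowerSeries.rescale (s + t) f := by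
  ext n
  simp only [diag, RingHom.coe_mk, MonoidHom.coe_mk, OneHom.coe_mk, diagFun,
    PowerSeries.coeff_mk, PowerSeries.coeff_rescale]
  have step : ∀ p ∈ Finset.HasAntidiagonal.antidiagonal n,
      MvPowerSeries.coeff (R := ℚ) (s2v p) (sub2 f s t)
        = PowerSeries.coeff (R := ℚ) n f * (s ^ p.1 * t ^ p.2 * (n.choose p.1 : ℚ)) := by
    intro p hp
    rw [Finset.HasAntidiagonal.mem_antidiagonal] at hp
    rw [MvPowerSeries.coeff_apply]
    show PowerSeries.coeff (R := ℚ) (s2v p 0 + s2v p 1) f * ((s2v p 0 + s2v p 1).choose (s2v p 0))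
        * s ^ (s2v p 0) * t ^ (s2v p 1) = _
    rw [s2v_apply0, s2v_apply1, hp]
    ring
  rw [Finset.sum_congr rfl step, ← Finset.mul_sum, add_pow,
    Finset.Nat.sum_antidiagonal_eq_sum_range_succ_mk, mul_comm]

private lemma sub2_ne0_left {f : PowerSeries ℚ} (h1 : PowerSeries.coeff (R := ℚ) 1 f = 1)
    {s : ℚ} (t : ℚ) (hs : s ≠ 0) : sub2 f s t ≠ 0 := by
  intro h
  have := congrArg (MvPowerSeries.coeff (R := ℚ) (s2v (1, 0))) h
  rw [MvPowerSeries.coeff_apply, map_zero] at this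
  apply hs
  have e : (sub2 f s t) (s2v (1, 0)) = s := by
    show PowerSeries.coeff (R := ℚ) (s2v (1,0) 0 + s2v (1,0) 1) f
        * ((s2v (1,0) 0 + s2v (1,0) 1).choose (s2v (1,0) 0)) * s ^ (s2v (1,0) 0)
        * t ^ (s2v (1,0) 1) = s
    rw [s2v_apply0, s2v_apply1]
    simp [h1]
  rw [← e]
  exact this

private lemma sub2_ne0_right {f : PowerSeries ℚ} (h1 : PowerSeries.coeff (R := ℚ) 1 f = 1)
    (s : ℚ) {t : ℚ} (ht : t ≠ 0) : sub2 f s t ≠ 0 := by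
  intro h
  have := congrArg (MvPowerSeries.coeff (R := ℚ) (s2v (0, 1))) h
  rw [MvPowerSeries.coeff_apply, map_zero] at this
  apply ht
  have e : (sub2 f s t) (s2v (0, 1)) = t := by
    show PowerSeries.coeff (R := ℚ) (s2v (0,1) 0 + s2v (0,1) 1) f
        * ((s2v (0,1) 0 + s2v (0,1) 1).choose (s2v (0,1) 0)) * s ^ (s2v (0,1) 0)
        * t ^ (s2v (0,1) 1) = t
    rw [s2v_apply0, s2v_apply1]
    simp [h1]
  rw [← e]
  exact this

set_option maxHeartbeats 4000000 in
/-- The relation on `f₄` forced by the functional equation. -/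
theorem stmt_5 (f : PowerSeries ℚ) (C : ℚ) (fc : ℕ → ℚ)
    (h0 : PowerSeries.constantCoeff (R := ℚ) f = 0) (h1 : PowerSeries.coeff (R := ℚ) 1 f = 1)
    (hfc : ∀ k, 1 ≤ k → PowerSeries.coeff (R := ℚ) (k + 1) f = fc k / ((k + 1).factorial : ℚ))
    (heq : TwoVarEq f C) :
    fc 4 = 15 * (fc 1) ^ 4 - 25 * (fc 1) ^ 2 * fc 2 + 7 * fc 1 * fc 3 + 4 * (fc 2) ^ 2 := by
  classical
  have hf0 : PowerSeries.coeff (R := ℚ) 0 f = 0 := by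
    simpa [PowerSeries.coeff_zero_eq_constantCoeff] using h0
  have hf2 : PowerSeries.coeff (R := ℚ) 2 f = fc 1 / 2 := by
    have h := hfc 1 le_rfl
    norm_num [show ((1:ℕ)+1).factorial = 2 from rfl] at h
    exact h
  have hf3 : PowerSeries.coeff (R := ℚ) 3 f = fc 2 / 6 := by
    have h := hfc 2 (by norm_num)
    norm_num [show ((2:ℕ)+1).factorial = 6 from rfl] at h
    exact h
  have hf4 : PowerSeries.coeff (R := ℚ) 4 f = fc 3 / 24 := by
    have h := hfc 3 (by norm_num)
    norm_num [show ((3:ℕ)+1).factorial = 24 from rfl] at h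
    exact h
  have hf5 : PowerSeries.coeff (R := ℚ) 5 f = fc 4 / 120 := by
    have h := hfc 4 (by norm_num)
    norm_num [show ((4:ℕ)+1).factorial = 120 from rfl] at h
    exact h
  have hf6 : PowerSeries.coeff (R := ℚ) 6 f = fc 5 / 720 := by
    have h := hfc 5 (by norm_num)
    norm_num [show ((5:ℕ)+1).factorial = 720 from rfl] at h
    exact h
  have hf7 : PowerSeries.coeff (R := ℚ) 7 f = fc 6 / 5040 := by
    have h := hfc 6 (by norm_num)
    norm_num [show ((6:ℕ)+1).factorial = 5040 from rfl] at h
    exact h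
  have hf8 : PowerSeries.coeff (R := ℚ) 8 f = fc 7 / 40320 := by
    have h := hfc 7 (by norm_num)
    norm_num [show ((7:ℕ)+1).factorial = 40320 from rfl] at h
    exact h
  have hA : sub2 f 1 0 ≠ 0 := sub2_ne0_left h1 0 one_ne_zero
  have hB : sub2 f 1 1 ≠ 0 := sub2_ne0_left h1 1 one_ne_zero
  have hA' : sub2 f (-1) 0 ≠ 0 := sub2_ne0_left h1 0 (by norm_num)
  have hD : sub2 f 0 1 ≠ 0 := sub2_ne0_right h1 0 one_ne_zero
  have hB' : sub2 f (-1) (-1) ≠ 0 := sub2_ne0_left h1 (-1) (by norm_num)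
  have hD' : sub2 f 0 (-1) ≠ 0 := sub2_ne0_right h1 0 (by norm_num)
  have inj := IsFractionRing.injective (MvPowerSeries (Fin 2) ℚ)
    (FractionRing (MvPowerSeries (Fin 2) ℚ))
  have hmap : ∀ g : MvPowerSeries (Fin 2) ℚ, g ≠ 0 →
      algebraMap (MvPowerSeries (Fin 2) ℚ) (FractionRing (MvPowerSeries (Fin 2) ℚ)) g ≠ 0 :=
    fun g hg h => hg (inj (by rw [h, map_zero]))
  have haK := hmap _ hA
  have hbK := hmap _ hB
  have haK' := hmap _ hA'
  have hdK := hmap _ hD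
  have hbK' := hmap _ hB'
  have hdK' := hmap _ hD'
  have h := heq
  unfold TwoVarEq qv at h
  field_simp at h
  have hCmap : algebraMap (MvPowerSeries (Fin 2) ℚ) (FractionRing (MvPowerSeries (Fin 2) ℚ))
      (MvPowerSeries.C (σ := Fin 2) (R := ℚ) C) = (C : FractionRing (MvPowerSeries (Fin 2) ℚ)) := by
    have := eq_ratCast ((algebraMap (MvPowerSeries (Fin 2) ℚ)
      (FractionRing (MvPowerSeries (Fin 2) ℚ))).comp (MvPowerSeries.C (σ := Fin 2) (R := ℚ))) C
    rwa [RingHom.comp_apply] at this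
  have keyR : sub2 f (-1) 0 * sub2 f 0 1 * (sub2 f (-1) (-1) * sub2 f 0 (-1))
      + sub2 f 1 0 * sub2 f 1 1 * (sub2 f (-1) (-1) * sub2 f 0 (-1))
      + sub2 f 1 0 * sub2 f 1 1 * (sub2 f (-1) 0 * sub2 f 0 1)
      = MvPowerSeries.C (σ := Fin 2) (R := ℚ) C * (sub2 f 1 0 * sub2 f 1 1
          * (sub2 f (-1) 0 * sub2 f 0 1) * (sub2 f (-1) (-1) * sub2 f 0 (-1))) := by
    apply inj
    simp only [map_add, map_mul, hCmap]
    linear_combination h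
  have d1 : diag (sub2 f 1 0) = f := by
    rw [diag_sub2]; norm_num [PowerSeries.rescale_one]
  have d2 : diag (sub2 f 1 1) = PowerSeries.rescale 2 f := by
    rw [diag_sub2]; norm_num
  have d3 : diag (sub2 f (-1) 0) = PowerSeries.rescale (-1) f := by
    rw [diag_sub2]; norm_num
  have d4 : diag (sub2 f 0 1) = f := by
    rw [diag_sub2]; norm_num [PowerSeries.rescale_one]
  have d5 : diag (sub2 f (-1) (-1)) = PowerSeries.rescale (-2) f := by
    rw [diag_sub2]; norm_num
  have d6 : diag (sub2 f 0 (-1)) = PowerSeries.rescale (-1) f := by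
    rw [diag_sub2]; norm_num
  have key2 := congrArg diag keyR
  simp only [map_add, map_mul, diag_C, d1, d2, d3, d4, d5, d6] at key2
  have p1_0 : PowerSeries.coeff (R := ℚ) 0 (f * PowerSeries.rescale 2 f) = (0:ℚ) := by
    rw [cmul]; simp [Finset.sum_range_succ, PowerSeries.coeff_rescale, hf0, h1, hf2, hf3, hf4, hf5, hf6, hf7, hf8]; try ring
  have p1_1 : PowerSeries.coeff (R := ℚ) 1 (f * PowerSeries.rescale 2 f) = (0:ℚ) := by
    rw [cmul]; simp [Finset.sum_range_succ, PowerSeries.coeff_rescale, hf0, h1, hf2, hf3, hf4, hf5, hf6, hf7, hf8]; try ring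
  have p1_2 : PowerSeries.coeff (R := ℚ) 2 (f * PowerSeries.rescale 2 f) = (2 : ℚ) := by
    rw [cmul]; simp [Finset.sum_range_succ, PowerSeries.coeff_rescale, hf0, h1, hf2, hf3, hf4, hf5, hf6, hf7, hf8]; try ring
  have p1_3 : PowerSeries.coeff (R := ℚ) 3 (f * PowerSeries.rescale 2 f) = (3 : ℚ) * fc 1 := by
    rw [cmul]; simp [Finset.sum_range_succ, PowerSeries.coeff_rescale, hf0, h1, hf2, hf3, hf4, hf5, hf6, hf7, hf8]; try ring
  have p1_4 : PowerSeries.coeff (R := ℚ) 4 (f * PowerSeries.rescale 2 f) = (5/3 : ℚ) * fc 2 + (1 : ℚ) * fc 1^2 := by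
    rw [cmul]; simp [Finset.sum_range_succ, PowerSeries.coeff_rescale, hf0, h1, hf2, hf3, hf4, hf5, hf6, hf7, hf8]; try ring
  have p1_5 : PowerSeries.coeff (R := ℚ) 5 (f * PowerSeries.rescale 2 f) = (3/4 : ℚ) * fc 3 + (1 : ℚ) * fc 1 * fc 2 := by
    rw [cmul]; simp [Finset.sum_range_succ, PowerSeries.coeff_rescale, hf0, h1, hf2, hf3, hf4, hf5, hf6, hf7, hf8]; try ring
  have p1_6 : PowerSeries.coeff (R := ℚ) 6 (f * PowerSeries.rescale 2 f) = (17/60 : ℚ) * fc 4 + (2/9 : ℚ) * fc 2^2 + (5/12 : ℚ) * fc 1 * fc 3 := by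
    rw [cmul]; simp [Finset.sum_range_succ, PowerSeries.coeff_rescale, hf0, h1, hf2, hf3, hf4, hf5, hf6, hf7, hf8]; try ring
  have p1_7 : PowerSeries.coeff (R := ℚ) 7 (f * PowerSeries.rescale 2 f) = (11/120 : ℚ) * fc 5 + (1/6 : ℚ) * fc 2 * fc 3 + (3/20 : ℚ) * fc 1 * fc 4 := by
    rw [cmul]; simp [Finset.sum_range_succ, PowerSeries.coeff_rescale, hf0, h1, hf2, hf3, hf4, hf5, hf6, hf7, hf8]; try ring
  have p1_8 : PowerSeries.coeff (R := ℚ) 8 (f * PowerSeries.rescale 2 f) = (13/504 : ℚ) * fc 6 + (1/36 : ℚ) * fc 3^2 + (1/18 : ℚ) * fc 2 * fc 4 + (17/360 : ℚ) * fc 1 * fc 5 := by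
    rw [cmul]; simp [Finset.sum_range_succ, PowerSeries.coeff_rescale, hf0, h1, hf2, hf3, hf4, hf5, hf6, hf7, hf8]; try ring
  have p2_0 : PowerSeries.coeff (R := ℚ) 0 (PowerSeries.rescale (-1) f * f) = (0:ℚ) := by
    rw [cmul]; simp [Finset.sum_range_succ, PowerSeries.coeff_rescale, hf0, h1, hf2, hf3, hf4, hf5, hf6, hf7, hf8]; try ring
  have p2_1 : PowerSeries.coeff (R := ℚ) 1 (PowerSeries.rescale (-1) f * f) = (0:ℚ) := by
    rw [cmul]; simp [Finset.sum_range_succ, PowerSeries.coeff_rescale, hf0, h1, hf2, hf3, hf4, hf5, hf6, hf7, hf8]; try ring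
  have p2_2 : PowerSeries.coeff (R := ℚ) 2 (PowerSeries.rescale (-1) f * f) = (-1 : ℚ) := by
    rw [cmul]; simp [Finset.sum_range_succ, PowerSeries.coeff_rescale, hf0, h1, hf2, hf3, hf4, hf5, hf6, hf7, hf8]; try ring
  have p2_3 : PowerSeries.coeff (R := ℚ) 3 (PowerSeries.rescale (-1) f * f) = (0:ℚ) := by
    rw [cmul]; simp [Finset.sum_range_succ, PowerSeries.coeff_rescale, hf0, h1, hf2, hf3, hf4, hf5, hf6, hf7, hf8]; try ring
  have p2_4 : PowerSeries.coeff (R := ℚ) 4 (PowerSeries.rescale (-1) f * f) = (-1/3 : ℚ) * fc 2 + (1/4 : ℚ) * fc 1^2 := by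
    rw [cmul]; simp [Finset.sum_range_succ, PowerSeries.coeff_rescale, hf0, h1, hf2, hf3, hf4, hf5, hf6, hf7, hf8]; try ring
  have p2_5 : PowerSeries.coeff (R := ℚ) 5 (PowerSeries.rescale (-1) f * f) = (0:ℚ) := by
    rw [cmul]; simp [Finset.sum_range_succ, PowerSeries.coeff_rescale, hf0, h1, hf2, hf3, hf4, hf5, hf6, hf7, hf8]; try ring
  have p2_6 : PowerSeries.coeff (R := ℚ) 6 (PowerSeries.rescale (-1) f * f) = (-1/60 : ℚ) * fc 4 + (-1/36 : ℚ) * fc 2^2 + (1/24 : ℚ) * fc 1 * fc 3 := by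
    rw [cmul]; simp [Finset.sum_range_succ, PowerSeries.coeff_rescale, hf0, h1, hf2, hf3, hf4, hf5, hf6, hf7, hf8]; try ring
  have p2_7 : PowerSeries.coeff (R := ℚ) 7 (PowerSeries.rescale (-1) f * f) = (0:ℚ) := by
    rw [cmul]; simp [Finset.sum_range_succ, PowerSeries.coeff_rescale, hf0, h1, hf2, hf3, hf4, hf5, hf6, hf7, hf8]; try ring
  have p2_8 : PowerSeries.coeff (R := ℚ) 8 (PowerSeries.rescale (-1) f * f) = (-1/2520 : ℚ) * fc 6 + (1/576 : ℚ) * fc 3^2 + (-1/360 : ℚ) * fc 2 * fc 4 + (1/720 : ℚ) * fc 1 * fc 5 := by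
    rw [cmul]; simp [Finset.sum_range_succ, PowerSeries.coeff_rescale, hf0, h1, hf2, hf3, hf4, hf5, hf6, hf7, hf8]; try ring
  have p3_0 : PowerSeries.coeff (R := ℚ) 0 (PowerSeries.rescale (-2) f * PowerSeries.rescale (-1) f) = (0:ℚ) := by
    rw [cmul]; simp [Finset.sum_range_succ, PowerSeries.coeff_rescale, hf0, h1, hf2, hf3, hf4, hf5, hf6, hf7, hf8]; try ring
  have p3_1 : PowerSeries.coeff (R := ℚ) 1 (PowerSeries.rescale (-2) f * PowerSeries.rescale (-1) f) = (0:ℚ) := by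
    rw [cmul]; simp [Finset.sum_range_succ, PowerSeries.coeff_rescale, hf0, h1, hf2, hf3, hf4, hf5, hf6, hf7, hf8]; try ring
  have p3_2 : PowerSeries.coeff (R := ℚ) 2 (PowerSeries.rescale (-2) f * PowerSeries.rescale (-1) f) = (2 : ℚ) := by
    rw [cmul]; simp [Finset.sum_range_succ, PowerSeries.coeff_rescale, hf0, h1, hf2, hf3, hf4, hf5, hf6, hf7, hf8]; try ring
  have p3_3 : PowerSeries.coeff (R := ℚ) 3 (PowerSeries.rescale (-2) f * PowerSeries.rescale (-1) f) = (-3 : ℚ) * fc 1 := by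
    rw [cmul]; simp [Finset.sum_range_succ, PowerSeries.coeff_rescale, hf0, h1, hf2, hf3, hf4, hf5, hf6, hf7, hf8]; try ring
  have p3_4 : PowerSeries.coeff (R := ℚ) 4 (PowerSeries.rescale (-2) f * PowerSeries.rescale (-1) f) = (5/3 : ℚ) * fc 2 + (1 : ℚ) * fc 1^2 := by
    rw [cmul]; simp [Finset.sum_range_succ, PowerSeries.coeff_rescale, hf0, h1, hf2, hf3, hf4, hf5, hf6, hf7, hf8]; try ring
  have p3_5 : PowerSeries.coeff (R := ℚ) 5 (PowerSeries.rescale (-2) f * PowerSeries.rescale (-1) f) = (-3/4 : ℚ) * fc 3 + (-1 : ℚ) * fc 1 * fc 2 := by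
    rw [cmul]; simp [Finset.sum_range_succ, PowerSeries.coeff_rescale, hf0, h1, hf2, hf3, hf4, hf5, hf6, hf7, hf8]; try ring
  have p3_6 : PowerSeries.coeff (R := ℚ) 6 (PowerSeries.rescale (-2) f * PowerSeries.rescale (-1) f) = (17/60 : ℚ) * fc 4 + (2/9 : ℚ) * fc 2^2 + (5/12 : ℚ) * fc 1 * fc 3 := by
    rw [cmul]; simp [Finset.sum_range_succ, PowerSeries.coeff_rescale, hf0, h1, hf2, hf3, hf4, hf5, hf6, hf7, hf8]; try ring
  have p3_7 : PowerSeries.coeff (R := ℚ) 7 (PowerSeries.rescale (-2) f * PowerSeries.rescale (-1) f) = (-11/120 : ℚ) * fc 5 + (-1/6 : ℚ) * fc 2 * fc 3 + (-3/20 : ℚ) * fc 1 * fc 4 := by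
    rw [cmul]; simp [Finset.sum_range_succ, PowerSeries.coeff_rescale, hf0, h1, hf2, hf3, hf4, hf5, hf6, hf7, hf8]; try ring
  have p3_8 : PowerSeries.coeff (R := ℚ) 8 (PowerSeries.rescale (-2) f * PowerSeries.rescale (-1) f) = (13/504 : ℚ) * fc 6 + (1/36 : ℚ) * fc 3^2 + (1/18 : ℚ) * fc 2 * fc 4 + (17/360 : ℚ) * fc 1 * fc 5 := by
    rw [cmul]; simp [Finset.sum_range_succ, PowerSeries.coeff_rescale, hf0, h1, hf2, hf3, hf4, hf5, hf6, hf7, hf8]; try ring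
  have p4_0 : PowerSeries.coeff (R := ℚ) 0 ((f * PowerSeries.rescale 2 f) * (PowerSeries.rescale (-1) f * f)) = (0:ℚ) := by
    rw [cmul]; simp [Finset.sum_range_succ, p1_0, p1_1, p1_2, p1_3, p1_4, p1_5, p1_6, p1_7, p1_8, p2_0, p2_1, p2_2, p2_3, p2_4, p2_5, p2_6, p2_7, p2_8]; try ring
  have p4_1 : PowerSeries.coeff (R := ℚ) 1 ((f * PowerSeries.rescale 2 f) * (PowerSeries.rescale (-1) f * f)) = (0:ℚ) := by
    rw [cmul]; simp [Finset.sum_range_succ, p1_0, p1_1, p1_2, p1_3, p1_4, p1_5, p1_6, p1_7, p1_8, p2_0, p2_1, p2_2, p2_3, p2_4, p2_5, p2_6, p2_7, p2_8]; try ring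
  have p4_2 : PowerSeries.coeff (R := ℚ) 2 ((f * PowerSeries.rescale 2 f) * (PowerSeries.rescale (-1) f * f)) = (0:ℚ) := by
    rw [cmul]; simp [Finset.sum_range_succ, p1_0, p1_1, p1_2, p1_3, p1_4, p1_5, p1_6, p1_7, p1_8, p2_0, p2_1, p2_2, p2_3, p2_4, p2_5, p2_6, p2_7, p2_8]; try ring
  have p4_3 : PowerSeries.coeff (R := ℚ) 3 ((f * PowerSeries.rescale 2 f) * (PowerSeries.rescale (-1) f * f)) = (0:ℚ) := by
    rw [cmul]; simp [Finset.sum_range_succ, p1_0, p1_1, p1_2, p1_3, p1_4, p1_5, p1_6, p1_7, p1_8, p2_0, p2_1, p2_2, p2_3, p2_4, p2_5, p2_6, p2_7, p2_8]; try ring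
  have p4_4 : PowerSeries.coeff (R := ℚ) 4 ((f * PowerSeries.rescale 2 f) * (PowerSeries.rescale (-1) f * f)) = (-2 : ℚ) := by
    rw [cmul]; simp [Finset.sum_range_succ, p1_0, p1_1, p1_2, p1_3, p1_4, p1_5, p1_6, p1_7, p1_8, p2_0, p2_1, p2_2, p2_3, p2_4, p2_5, p2_6, p2_7, p2_8]; try ring
  have p4_5 : PowerSeries.coeff (R := ℚ) 5 ((f * PowerSeries.rescale 2 f) * (PowerSeries.rescale (-1) f * f)) = (-3 : ℚ) * fc 1 := by
    rw [cmul]; simp [Finset.sum_range_succ, p1_0, p1_1, p1_2, p1_3, p1_4, p1_5, p1_6, p1_7, p1_8, p2_0, p2_1, p2_2, p2_3, p2_4, p2_5, p2_6, p2_7, p2_8]; try ring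
  have p4_6 : PowerSeries.coeff (R := ℚ) 6 ((f * PowerSeries.rescale 2 f) * (PowerSeries.rescale (-1) f * f)) = (-7/3 : ℚ) * fc 2 + (-1/2 : ℚ) * fc 1^2 := by
    rw [cmul]; simp [Finset.sum_range_succ, p1_0, p1_1, p1_2, p1_3, p1_4, p1_5, p1_6, p1_7, p1_8, p2_0, p2_1, p2_2, p2_3, p2_4, p2_5, p2_6, p2_7, p2_8]; try ring
  have p4_7 : PowerSeries.coeff (R := ℚ) 7 ((f * PowerSeries.rescale 2 f) * (PowerSeries.rescale (-1) f * f)) = (-3/4 : ℚ) * fc 3 + (-2 : ℚ) * fc 1 * fc 2 + (3/4 : ℚ) * fc 1^3 := by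
    rw [cmul]; simp [Finset.sum_range_succ, p1_0, p1_1, p1_2, p1_3, p1_4, p1_5, p1_6, p1_7, p1_8, p2_0, p2_1, p2_2, p2_3, p2_4, p2_5, p2_6, p2_7, p2_8]; try ring
  have p4_8 : PowerSeries.coeff (R := ℚ) 8 ((f * PowerSeries.rescale 2 f) * (PowerSeries.rescale (-1) f * f)) = (-19/60 : ℚ) * fc 4 + (-5/6 : ℚ) * fc 2^2 + (-1/3 : ℚ) * fc 1 * fc 3 + (1/12 : ℚ) * fc 1^2 * fc 2 + (1/4 : ℚ) * fc 1^4 := by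
    rw [cmul]; simp [Finset.sum_range_succ, p1_0, p1_1, p1_2, p1_3, p1_4, p1_5, p1_6, p1_7, p1_8, p2_0, p2_1, p2_2, p2_3, p2_4, p2_5, p2_6, p2_7, p2_8]; try ring
  have t1_6 : PowerSeries.coeff (R := ℚ) 6 ((PowerSeries.rescale (-1) f * f) * (PowerSeries.rescale (-2) f * PowerSeries.rescale (-1) f)) = (-7/3 : ℚ) * fc 2 + (-1/2 : ℚ) * fc 1^2 := by
    rw [cmul]; simp [Finset.sum_range_succ, p2_0, p2_1, p2_2, p2_3, p2_4, p2_5, p2_6, p2_7, p2_8, p3_0, p3_1, p3_2, p3_3, p3_4, p3_5, p3_6, p3_7, p3_8]; try ring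
  have t1_8 : PowerSeries.coeff (R := ℚ) 8 ((PowerSeries.rescale (-1) f * f) * (PowerSeries.rescale (-2) f * PowerSeries.rescale (-1) f)) = (-19/60 : ℚ) * fc 4 + (-5/6 : ℚ) * fc 2^2 + (-1/3 : ℚ) * fc 1 * fc 3 + (1/12 : ℚ) * fc 1^2 * fc 2 + (1/4 : ℚ) * fc 1^4 := by
    rw [cmul]; simp [Finset.sum_range_succ, p2_0, p2_1, p2_2, p2_3, p2_4, p2_5, p2_6, p2_7, p2_8, p3_0, p3_1, p3_2, p3_3, p3_4, p3_5, p3_6, p3_7, p3_8]; try ring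
  have t2_6 : PowerSeries.coeff (R := ℚ) 6 ((f * PowerSeries.rescale 2 f) * (PowerSeries.rescale (-2) f * PowerSeries.rescale (-1) f)) = (20/3 : ℚ) * fc 2 + (-5 : ℚ) * fc 1^2 := by
    rw [cmul]; simp [Finset.sum_range_succ, p1_0, p1_1, p1_2, p1_3, p1_4, p1_5, p1_6, p1_7, p1_8, p3_0, p3_1, p3_2, p3_3, p3_4, p3_5, p3_6, p3_7, p3_8]; try ring
  have t2_8 : PowerSeries.coeff (R := ℚ) 8 ((f * PowerSeries.rescale 2 f) * (PowerSeries.rescale (-2) f * PowerSeries.rescale (-1) f)) = (17/15 : ℚ) * fc 4 + (11/3 : ℚ) * fc 2^2 + (-17/6 : ℚ) * fc 1 * fc 3 + (-8/3 : ℚ) * fc 1^2 * fc 2 + (1 : ℚ) * fc 1^4 := by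
    rw [cmul]; simp [Finset.sum_range_succ, p1_0, p1_1, p1_2, p1_3, p1_4, p1_5, p1_6, p1_7, p1_8, p3_0, p3_1, p3_2, p3_3, p3_4, p3_5, p3_6, p3_7, p3_8]; try ring
  have rh_6 : PowerSeries.coeff (R := ℚ) 6 (((f * PowerSeries.rescale 2 f) * (PowerSeries.rescale (-1) f * f)) * (PowerSeries.rescale (-2) f * PowerSeries.rescale (-1) f)) = (-4 : ℚ) := by
    rw [cmul]; simp [Finset.sum_range_succ, p4_0, p4_1, p4_2, p4_3, p4_4, p4_5, p4_6, p4_7, p4_8, p3_0, p3_1, p3_2, p3_3, p3_4, p3_5, p3_6, p3_7, p3_8]; try ring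
  have rh_8 : PowerSeries.coeff (R := ℚ) 8 (((f * PowerSeries.rescale 2 f) * (PowerSeries.rescale (-1) f * f)) * (PowerSeries.rescale (-2) f * PowerSeries.rescale (-1) f)) = (-8 : ℚ) * fc 2 + (6 : ℚ) * fc 1^2 := by
    rw [cmul]; simp [Finset.sum_range_succ, p4_0, p4_1, p4_2, p4_3, p4_4, p4_5, p4_6, p4_7, p4_8, p3_0, p3_1, p3_2, p3_3, p3_4, p3_5, p3_6, p3_7, p3_8]; try ring
  have e6 := congrArg (PowerSeries.coeff (R := ℚ) 6) key2
  rw [map_add, map_add, PowerSeries.coeff_C_mul, t1_6, t2_6, p4_6, rh_6] at e6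
  have e8 := congrArg (PowerSeries.coeff (R := ℚ) 8) key2
  rw [map_add, map_add, PowerSeries.coeff_C_mul, t1_8, t2_8, p4_8, rh_8] at e8
  linear_combination (2:ℚ) * e8 + (3 * fc 1 ^ 2 - 4 * fc 2) * e6
end

section
/- Given f₁, f₂, f₃ ∈ R, there is at most one formal power series f(x) = x + Σ_{k≥1} fₖ x^{k+1}/(k+1)! (i.e. all later coefficients f₄, f₅, ... are uniquely determined) such that q = 1/f satisfies q(x)² − f₁ q(−x) + q'(−x) = C for some constant C. -/
open PowerSeries HahnSeries

noncomputable def sh (f : PowerSeries ℚ) : PowerSeries ℚ :=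
  PowerSeries.mk fun n => PowerSeries.coeff (n+1) f

lemma sh_const (f : PowerSeries ℚ) (h1f : PowerSeries.coeff 1 f = 1) :
    PowerSeries.constantCoeff (sh f) = 1 := by
  have := PowerSeries.coeff_mk 0 (fun n => PowerSeries.coeff (n+1) f)
  simpa [sh, ← PowerSeries.coeff_zero_eq_constantCoeff] using h1f

lemma f_eq (f : PowerSeries ℚ) (h0f : PowerSeries.constantCoeff f = 0) :
    f = PowerSeries.X * sh f := by
  ext n
  cases n with
  | zero => simpa [PowerSeries.coeff_zero_eq_constantCoeff] using h0f
  | succ m => simp [PowerSeries.coeff_succ_X_mul, sh]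

lemma lq_eq (f : PowerSeries ℚ) (h0f : PowerSeries.constantCoeff f = 0)
    (h1f : PowerSeries.coeff 1 f = 1) :
    lq f = HahnSeries.single (-1 : ℤ) (1 : ℚ) * HahnSeries.ofPowerSeries ℤ ℚ (sh f)⁻¹ := by
  have hc : PowerSeries.constantCoeff (sh f) ≠ 0 := by rw [sh_const f h1f]; norm_num
  apply inv_eq_of_mul_eq_one_right
  set u := sh f with hu
  have hfx : f = PowerSeries.X * u := f_eq f h0f
  rw [hfx, map_mul, HahnSeries.ofPowerSeries_X]
  have huv : HahnSeries.ofPowerSeries ℤ ℚ u * HahnSeries.ofPowerSeries ℤ ℚ u⁻¹ = 1 := by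
    rw [← map_mul, PowerSeries.mul_inv_cancel _ hc, map_one]
  calc HahnSeries.single (1 : ℤ) (1 : ℚ) * HahnSeries.ofPowerSeries ℤ ℚ u *
        (HahnSeries.single (-1 : ℤ) (1 : ℚ) * HahnSeries.ofPowerSeries ℤ ℚ u⁻¹)
      = (HahnSeries.single (1 : ℤ) (1 : ℚ) * HahnSeries.single (-1 : ℤ) (1 : ℚ)) *
        (HahnSeries.ofPowerSeries ℤ ℚ u * HahnSeries.ofPowerSeries ℤ ℚ u⁻¹) := by ring
    _ = 1 := by rw [huv, HahnSeries.single_mul_single]; norm_num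

lemma lq_coeff (f : PowerSeries ℚ) (h0f : PowerSeries.constantCoeff f = 0)
    (h1f : PowerSeries.coeff 1 f = 1) (n : ℕ) :
    (lq f).coeff ((n : ℤ) - 1) = PowerSeries.coeff n (sh f)⁻¹ := by
  rw [lq_eq f h0f h1f, show ((n : ℤ) - 1) = (n : ℤ) + (-1) by ring, HahnSeries.coeff_single_mul_add,
    HahnSeries.ofPowerSeries_apply_coeff, one_mul]

lemma lq_sq_coeff (f : PowerSeries ℚ) (h0f : PowerSeries.constantCoeff f = 0)
    (h1f : PowerSeries.coeff 1 f = 1) (n : ℕ) :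
    ((lq f) ^ 2).coeff ((n : ℤ) - 2) = PowerSeries.coeff n ((sh f)⁻¹ * (sh f)⁻¹) := by
  rw [lq_eq f h0f h1f]
  have h2 : (HahnSeries.single (-1 : ℤ) (1 : ℚ) * HahnSeries.ofPowerSeries ℤ ℚ (sh f)⁻¹) ^ 2
      = HahnSeries.single (-2 : ℤ) (1 : ℚ) *
        HahnSeries.ofPowerSeries ℤ ℚ ((sh f)⁻¹ * (sh f)⁻¹) := by
    rw [map_mul, show HahnSeries.single (-2 : ℤ) (1 : ℚ)
      = HahnSeries.single (-1 : ℤ) (1 : ℚ) * HahnSeries.single (-1 : ℤ) (1 : ℚ) by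
        rw [HahnSeries.single_mul_single]; norm_num]
    ring
  rw [h2, show ((n : ℤ) - 2) = (n : ℤ) + (-2) by ring, HahnSeries.coeff_single_mul_add,
    HahnSeries.ofPowerSeries_apply_coeff, one_mul]

lemma key (f : PowerSeries ℚ) (f1 C : ℚ) (h0f : PowerSeries.constantCoeff f = 0)
    (h1f : PowerSeries.coeff 1 f = 1) (h : OneVarEq f f1 C) (n : ℕ) :
    PowerSeries.coeff (n+2) ((sh f)⁻¹ * (sh f)⁻¹)
      - f1 * ((-1 : ℚ)^n * PowerSeries.coeff (n+1) (sh f)⁻¹)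
      + (-1 : ℚ)^n * ((n : ℚ)+1) * PowerSeries.coeff (n+2) (sh f)⁻¹
      = if n = 0 then C else 0 := by
  have h' := congrArg (fun x : LaurentSeries ℚ => x.coeff (n : ℤ)) h
  have hnegsub : ∀ q : LaurentSeries ℚ, (negSub q).coeff (n : ℤ) =
      (-1:ℚ)^(n:ℤ) * q.coeff (n:ℤ) := fun q => rfl
  have hsq : ((lq f)^2).coeff (n : ℤ) = PowerSeries.coeff (n+2) ((sh f)⁻¹ * (sh f)⁻¹) := by
    have := lq_sq_coeff f h0f h1f (n+2)
    rw [show (((n+2 : ℕ)) : ℤ) - 2 = (n : ℤ) by push_cast; ring] at this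
    exact this
  have hq1 : (lq f).coeff (n : ℤ) = PowerSeries.coeff (n+1) (sh f)⁻¹ := by
    have := lq_coeff f h0f h1f (n+1)
    rw [show (((n+1 : ℕ)) : ℤ) - 1 = (n : ℤ) by push_cast; ring] at this
    exact this
  have hq2 : (lq f).coeff ((n : ℤ)+1) = PowerSeries.coeff (n+2) (sh f)⁻¹ := by
    have := lq_coeff f h0f h1f (n+2)
    rw [show (((n+2 : ℕ)) : ℤ) - 1 = (n : ℤ) + 1 by push_cast; ring] at this
    exact this
  have hD : (lD (lq f)).coeff (n : ℤ) = ((n : ℚ)+1) * (lq f).coeff ((n:ℤ)+1) := by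
    show (LaurentSeries.derivative ℚ (lq f)).coeff (n : ℤ) = _
    rw [LaurentSeries.derivative_apply, LaurentSeries.hasseDeriv_coeff]
    rw [Nat.cast_one, Ring.choose_one_right, zsmul_eq_mul]
    push_cast
    ring
  rw [HahnSeries.coeff_add, HahnSeries.coeff_sub, HahnSeries.coeff_smul,
    HahnSeries.coeff_smul, HahnSeries.coeff_one, hnegsub, hnegsub, hD, hsq, hq1, hq2,
    smul_eq_mul, smul_eq_mul, zpow_natCast] at h'
  by_cases hn : n = 0
  · subst hn
    simp only [if_pos rfl] at h' ⊢
    push_cast at h' ⊢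
    linarith [h']
  · have hn' : ((n : ℤ)) ≠ 0 := by exact_mod_cast hn
    rw [if_neg hn'] at h'
    rw [if_neg hn]
    linarith [h']

lemma inv_coeff_congr (φ ψ : PowerSeries ℚ) (N : ℕ)
    (h : ∀ i ≤ N, PowerSeries.coeff i φ = PowerSeries.coeff i ψ) :
    ∀ i ≤ N, PowerSeries.coeff i φ⁻¹ = PowerSeries.coeff i ψ⁻¹ := by
  intro i
  induction i using Nat.strong_induction_on with
  | _ i ih =>
    intro hi
    have hc : PowerSeries.constantCoeff φ = PowerSeries.constantCoeff ψ := by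
      have := h 0 (Nat.zero_le N)
      simpa using this
    rw [PowerSeries.coeff_inv, PowerSeries.coeff_inv, hc]
    split
    · rfl
    · congr 1
      apply Finset.sum_congr rfl
      intro x hx
      rw [Finset.HasAntidiagonal.mem_antidiagonal] at hx
      split
      · next hlt =>
        rw [h x.1 (le_trans (by omega) hi), ih x.2 (by omega) (by omega)]
      · rfl

/-- Uniqueness: a power series `f(x) = x + Σ fₖ x^{k+1}/(k+1)!` such that `q = 1/f`
satisfies `q(x)² − f₁ q(−x) + q'(−x) = C` for some constant `C` is uniquely determined
by `f₁, f₂, f₃` (i.e. by its coefficients of `x², x³, x⁴`). -/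
theorem stmt_8 (f g : PowerSeries ℚ) (Cf Cg : ℚ)
    (h0f : PowerSeries.constantCoeff f = 0) (h1f : PowerSeries.coeff 1 f = 1)
    (h0g : PowerSeries.constantCoeff g = 0) (h1g : PowerSeries.coeff 1 g = 1)
    (h2 : PowerSeries.coeff 2 f = PowerSeries.coeff 2 g)
    (h3 : PowerSeries.coeff 3 f = PowerSeries.coeff 3 g)
    (h4 : PowerSeries.coeff 4 f = PowerSeries.coeff 4 g)
    (hf : OneVarEq f (2 * PowerSeries.coeff 2 f) Cf)
    (hg : OneVarEq g (2 * PowerSeries.coeff 2 g) Cg) :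
    f = g := by
  set a := (sh f)⁻¹ with ha
  set b := (sh g)⁻¹ with hb
  have hshfg : ∀ i ≤ 3, PowerSeries.coeff i (sh f) = PowerSeries.coeff i (sh g) := by
    intro i hi
    interval_cases i <;>
      simp only [sh, PowerSeries.coeff_mk] <;>
      first
        | exact h1f.trans h1g.symm
        | exact h2 | exact h3 | exact h4
  have hbase : ∀ i ≤ 3, PowerSeries.coeff i a = PowerSeries.coeff i b :=
    inv_coeff_congr (sh f) (sh g) 3 hshfg
  have ha0 : PowerSeries.coeff 0 a = 1 := by
    rw [ha, PowerSeries.coeff_zero_eq_constantCoeff, PowerSeries.constantCoeff_inv,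
      sh_const f h1f]
    norm_num
  have hb0 : PowerSeries.coeff 0 b = 1 := by
    rw [hb, PowerSeries.coeff_zero_eq_constantCoeff, PowerSeries.constantCoeff_inv,
      sh_const g h1g]
    norm_num
  have hall : ∀ m, PowerSeries.coeff m a = PowerSeries.coeff m b := by
    intro m
    induction m using Nat.strong_induction_on with
    | _ m ih =>
      by_cases hm : m ≤ 3
      · exact hbase m hm
      · push_neg at hm
        obtain ⟨n, rfl⟩ : ∃ n, m = n + 2 := ⟨m - 2, by omega⟩
        have hn2 : 2 ≤ n := by omega
        have kf := key f (2 * PowerSeries.coeff 2 f) Cf h0f h1f hf n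
        have kg := key g (2 * PowerSeries.coeff 2 g) Cg h0g h1g hg n
        rw [← h2] at kg
        rw [if_neg (by omega)] at kf kg
        have hc1 : PowerSeries.coeff (n+1) a = PowerSeries.coeff (n+1) b :=
          ih (n+1) (by omega)
        have hprod : PowerSeries.coeff (n+2) (a*a) - PowerSeries.coeff (n+2) (b*b)
            = 2 * (PowerSeries.coeff (n+2) a - PowerSeries.coeff (n+2) b) := by
          rw [PowerSeries.coeff_mul, PowerSeries.coeff_mul,
            Finset.Nat.sum_antidiagonal_eq_sum_range_succ_mk,
            Finset.Nat.sum_antidiagonal_eq_sum_range_succ_mk, ← Finset.sum_sub_distrib]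
          have hsplit := Finset.sum_range_succ (fun k =>
            PowerSeries.coeff k a * PowerSeries.coeff (n+2-k) a -
            PowerSeries.coeff k b * PowerSeries.coeff (n+2-k) b) (n+2)
          rw [hsplit]
          have hmid : (Finset.range (n+2)).sum (fun k =>
              PowerSeries.coeff k a * PowerSeries.coeff (n+2-k) a -
              PowerSeries.coeff k b * PowerSeries.coeff (n+2-k) b)
              = PowerSeries.coeff (n+2) a - PowerSeries.coeff (n+2) b := by
            rw [Finset.sum_eq_single_of_mem 0 (by simp)]
            · simp only [Nat.sub_zero, ha0, hb0, one_mul]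
            · intro k hk hk0
              rw [Finset.mem_range] at hk
              rw [ih k (by omega), ih (n+2-k) (by omega)]
              ring
          rw [hmid]
          simp only [Nat.sub_self, ha0, hb0, mul_one]
          ring
        have hd : (2 + (-1:ℚ)^n * ((n:ℚ)+1)) *
            (PowerSeries.coeff (n+2) a - PowerSeries.coeff (n+2) b) = 0 := by
          have := sub_eq_zero_of_eq (kf.trans kg.symm)
          rw [hc1] at this
          nlinarith [this, hprod]
        have hne : (2 + (-1:ℚ)^n * ((n:ℚ)+1)) ≠ 0 := by
          rcases Nat.even_or_odd n with he | ho
          · rw [he.neg_one_pow]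
            positivity
          · rw [ho.neg_one_pow]
            have : (2:ℚ) ≤ (n:ℚ) := by exact_mod_cast hn2
            intro hcon
            nlinarith
        have := mul_eq_zero.mp hd
        rcases this with h | h
        · exact absurd h hne
        · linarith [sub_eq_zero.mp h]
  have hab : a = b := PowerSeries.ext hall
  have hcf : PowerSeries.constantCoeff (sh f) ≠ 0 := by rw [sh_const f h1f]; norm_num
  have hcg : PowerSeries.constantCoeff (sh g) ≠ 0 := by rw [sh_const g h1g]; norm_num
  have hA : sh f * a = 1 := PowerSeries.mul_inv_cancel _ hcf
  have hB : sh g * b = 1 := PowerSeries.mul_inv_cancel _ hcg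
  have hane : a ≠ 0 := by
    intro h0
    rw [h0, mul_zero] at hA
    exact one_ne_zero hA.symm
  have hshfg' : sh f = sh g := by
    apply mul_right_cancel₀ hane
    rw [hA, hab, hB]
  rw [f_eq f h0f, f_eq g h0g, hshfg']
end

section
/- Let f(x) = −(2℘(x) + a²/2)/(℘'(x) − a℘(x) + b − a³/4) where ℘ has invariants g₂ = −(1/4)(8b−3a³)a, g₃ = (1/24)(8b²−12a³b+3a⁶). Then f has Taylor expansion f(x) = x + f₁x²/2! + f₂x³/3! + f₃x⁴/4! + ... at 0 with f₁ = −a, f₂ = 3a², f₃ = 12b − 9a³. -/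
open Filter Topology

set_option maxHeartbeats 2000000
set_option maxRecDepth 10000

private lemma analyticAt_deriv' {f : ℂ → ℂ} {x : ℂ} (hf : AnalyticAt ℂ f x) :
    AnalyticAt ℂ (deriv f) x := by
  obtain ⟨s, hs, h⟩ := hf.eventually_analyticAt.exists_mem
  exact (AnalyticOnNhd.deriv (fun z hz => h z hz)) x (mem_of_mem_nhds hs)

private lemma iteratedDeriv_add_at {f g : ℂ → ℂ} {x : ℂ} (n : ℕ)
    (hf : AnalyticAt ℂ f x) (hg : AnalyticAt ℂ g x) :
    iteratedDeriv n (fun z => f z + g z) x = iteratedDeriv n f x + iteratedDeriv n g x := by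
  obtain ⟨s, hs, h1⟩ := hf.eventually_analyticAt.exists_mem
  obtain ⟨t, ht, h2⟩ := hg.eventually_analyticAt.exists_mem
  have hu_open : IsOpen (interior s ∩ interior t) := isOpen_interior.inter isOpen_interior
  have hxu : x ∈ interior s ∩ interior t :=
    ⟨mem_interior_iff_mem_nhds.mpr hs, mem_interior_iff_mem_nhds.mpr ht⟩
  have hfu : ContDiffOn ℂ n f (interior s ∩ interior t) := fun z hz =>
    ((h1 z (interior_subset hz.1)).contDiffAt).contDiffWithinAt
  have hgu : ContDiffOn ℂ n g (interior s ∩ interior t) := fun z hz =>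
    ((h2 z (interior_subset hz.2)).contDiffAt).contDiffWithinAt
  have hw : ∀ h : ℂ → ℂ, iteratedDerivWithin n h (interior s ∩ interior t) x
      = iteratedDeriv n h x := by
    intro h
    rw [iteratedDerivWithin, iteratedDeriv, iteratedFDerivWithin_of_isOpen n hu_open hxu]
  have e : (fun z => f z + g z) = f + g := rfl
  rw [e, ← hw, ← hw, ← hw]
  exact iteratedDerivWithin_add hxu hu_open.uniqueDiffOn (hfu x hxu) (hgu x hxu)

private lemma iteratedDeriv_pow_mul_eq_zero :
    ∀ (k n : ℕ) (H : ℂ → ℂ), AnalyticAt ℂ H 0 → k < n →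
      iteratedDeriv k (fun z => z ^ n * H z) 0 = 0 := by
  intro k
  induction k with
  | zero =>
    intro n H _ hn
    simp only [iteratedDeriv_zero]
    rw [zero_pow (by omega), zero_mul]
  | succ k ih =>
    intro n H hH hn
    obtain ⟨m, rfl⟩ : ∃ m, n = m + 1 := ⟨n - 1, by omega⟩
    rw [iteratedDeriv_succ']
    have hd : deriv (fun z : ℂ => z ^ (m + 1) * H z)
        =ᶠ[𝓝 (0 : ℂ)] fun z => z ^ m * (((m : ℂ) + 1) * H z + z * deriv H z) := by
      filter_upwards [hH.eventually_analyticAt] with z hz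
      have h1 := (hasDerivAt_pow (m + 1) z).mul hz.differentiableAt.hasDerivAt
      rw [HasDerivAt.deriv (f := fun z : ℂ => z ^ (m + 1) * H z) h1, Nat.add_sub_cancel]
      push_cast
      ring
    rw [hd.iteratedDeriv_eq k]
    exact ih m _ ((analyticAt_const.mul hH).add (analyticAt_id.mul (analyticAt_deriv' hH)))
      (by omega)

private noncomputable def TT (a b : ℂ) : ℂ → ℂ := fun z =>
  z - a / 2 * z ^ 2 + a ^ 2 / 2 * z ^ 3 + (b / 2 - 3 * a ^ 3 / 8) * z ^ 4

private noncomputable def NN (a b g2 g3 : ℂ) (E : ℂ → ℂ) : ℂ → ℂ := fun z =>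
  2 * z + a ^ 2 / 2 * z ^ 3 + g2 / 10 * z ^ 5 + g3 / 14 * z ^ 7 + 2 * z ^ 9 * E z

private noncomputable def DD (a b g2 g3 : ℂ) (E : ℂ → ℂ) : ℂ → ℂ := fun z =>
  -2 - a * z + (b - a ^ 3 / 4) * z ^ 3 + g2 / 10 * z ^ 4 - a * g2 / 20 * z ^ 5
    + g3 / 7 * z ^ 6 - a * g3 / 28 * z ^ 7
    + z ^ 8 * (6 * E z + z * deriv E z) - a * z ^ 9 * E z

private noncomputable def SS (a b : ℂ) (E : ℂ → ℂ) : ℂ → ℂ := fun z =>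
  (7/5 * a * b - 13/20 * a ^ 4)
    + (-7/10 * a ^ 2 * b + 1/5 * a ^ 5) * z
    + (-4/7 * b ^ 2 + 53/70 * a ^ 3 * b - 99/560 * a ^ 6) * z ^ 2
    + (19/140 * a * b ^ 2 - 121/560 * a ^ 4 * b + 27/448 * a ^ 7) * z ^ 3
    + (-(6 * E z + z * deriv E z) - 2 * E z
        - 67/840 * a ^ 2 * b ^ 2 + 113/1120 * a ^ 5 * b - 113/4480 * a ^ 8) * z ^ 4
    + (-1/42 * b ^ 3 + 1/2 * a * (6 * E z + z * deriv E z) + a * E z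
        + 5/84 * a ^ 3 * b ^ 2 - 5/112 * a ^ 6 * b + 1/112 * a ^ 9) * z ^ 5
    + (1/168 * a * b ^ 3 - 1/2 * a ^ 2 * (6 * E z + z * deriv E z) - 1/2 * a ^ 2 * E z
        - 3/224 * a ^ 4 * b ^ 2 + 1/112 * a ^ 7 * b - 3/1792 * a ^ 10) * z ^ 6
    + (-1/2 * b * (6 * E z + z * deriv E z) + 3/8 * a ^ 3 * (6 * E z + z * deriv E z)
        + 1/2 * a ^ 3 * E z) * z ^ 7
    + (1/2 * a * b * E z - 3/8 * a ^ 4 * E z) * z ^ 8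

private lemma key_identity_s14 (a b g2 g3 : ℂ)
    (hg2 : g2 = -(1 / 4) * (8 * b - 3 * a ^ 3) * a)
    (hg3 : g3 = (1 / 24) * (8 * b ^ 2 - 12 * a ^ 3 * b + 3 * a ^ 6))
    (E : ℂ → ℂ) (z : ℂ) :
    -(NN a b g2 g3 E z) - DD a b g2 g3 E z * TT a b z = z ^ 5 * SS a b E z := by
  subst hg2 hg3
  simp only [NN, DD, TT, SS]
  ring

/-- Let `f(x) = −(2℘(x) + a²/2)/(℘'(x) − a℘(x) + b − a³/4)` where `℘` has the Laurent
expansion `℘(x) = 1/x² + g₂x²/20 + g₃x⁴/28 + O(x⁶)` at `0`, with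
`g₂ = −(1/4)(8b − 3a³)a` and `g₃ = (1/24)(8b² − 12a³b + 3a⁶)`. Then `f` extends
analytically to `0` with `f(0) = 0`, `f'(0) = 1`, and Taylor coefficients
`f₁ = −a`, `f₂ = 3a²`, `f₃ = 12b − 9a³` in `f(x) = x + Σ fₖ x^{k+1}/(k+1)!`. -/
theorem stmt_14 (a b : ℂ) (P E : ℂ → ℂ)
    (g2 g3 : ℂ)
    (hg2 : g2 = -(1 / 4) * (8 * b - 3 * a ^ 3) * a)
    (hg3 : g3 = (1 / 24) * (8 * b ^ 2 - 12 * a ^ 3 * b + 3 * a ^ 6))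
    (hE : ∀ᶠ z in 𝓝 (0 : ℂ), AnalyticAt ℂ E z)
    (hP : ∀ᶠ z in 𝓝[≠] (0 : ℂ),
      P z = 1 / z ^ 2 + g2 / 20 * z ^ 2 + g3 / 28 * z ^ 4 + z ^ 6 * E z) :
    ∃ F : ℂ → ℂ, AnalyticAt ℂ F 0 ∧
      (∀ᶠ z in 𝓝[≠] (0 : ℂ),
        F z = -(2 * P z + a ^ 2 / 2) / (deriv P z - a * P z + b - a ^ 3 / 4)) ∧
      F 0 = 0 ∧
      deriv F 0 = 1 ∧
      iteratedDeriv 2 F 0 = -a ∧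
      iteratedDeriv 3 F 0 = 3 * a ^ 2 ∧
      iteratedDeriv 4 F 0 = 12 * b - 9 * a ^ 3 := by
  have hE0 : AnalyticAt ℂ E 0 := hE.self_of_nhds
  have hE0' : AnalyticAt ℂ (deriv E) 0 := analyticAt_deriv' hE0
  have hTTa : AnalyticAt ℂ (TT a b) 0 := by
    unfold TT
    repeat
      first
      | exact hE0 | exact hE0' | exact analyticAt_const | exact analyticAt_id
      | apply AnalyticAt.add | apply AnalyticAt.sub | apply AnalyticAt.mul
      | apply AnalyticAt.neg | apply AnalyticAt.pow
  have hDDa : AnalyticAt ℂ (DD a b g2 g3 E) 0 := by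
    unfold DD
    repeat
      first
      | exact hE0 | exact hE0' | exact analyticAt_const | exact analyticAt_id
      | apply AnalyticAt.add | apply AnalyticAt.sub | apply AnalyticAt.mul
      | apply AnalyticAt.neg | apply AnalyticAt.pow
  have hSSa : AnalyticAt ℂ (SS a b E) 0 := by
    unfold SS
    repeat
      first
      | exact hE0 | exact hE0' | exact analyticAt_const | exact analyticAt_id
      | apply AnalyticAt.add | apply AnalyticAt.sub | apply AnalyticAt.mul
      | apply AnalyticAt.neg | apply AnalyticAt.pow
  have hDD0 : DD a b g2 g3 E 0 = -2 := by simp [DD]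
  have hDDne : DD a b g2 g3 E 0 ≠ 0 := by rw [hDD0]; norm_num
  have hHa : AnalyticAt ℂ (fun z => SS a b E z / DD a b g2 g3 E z) 0 :=
    hSSa.div hDDa hDDne
  have hGa : AnalyticAt ℂ (fun z => z ^ 5 * (SS a b E z / DD a b g2 g3 E z)) 0 :=
    (analyticAt_id.pow 5).mul hHa
  -- derivatives of TT
  have hT1 : deriv (TT a b) = fun z =>
      1 - a * z + 3 * a ^ 2 / 2 * z ^ 2 + (2 * b - 3 * a ^ 3 / 2) * z ^ 3 := by
    funext z
    have h := (((hasDerivAt_id z).sub ((hasDerivAt_pow 2 z).const_mul (a / 2))).add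
      ((hasDerivAt_pow 3 z).const_mul (a ^ 2 / 2))).add
      ((hasDerivAt_pow 4 z).const_mul (b / 2 - 3 * a ^ 3 / 8))
    have h2 : deriv (TT a b) z = _ := HasDerivAt.deriv h
    rw [h2]
    push_cast
    norm_num
    ring
  have hT2 : deriv (fun z : ℂ =>
      1 - a * z + 3 * a ^ 2 / 2 * z ^ 2 + (2 * b - 3 * a ^ 3 / 2) * z ^ 3)
      = fun z => -a + 3 * a ^ 2 * z + (6 * b - 9 * a ^ 3 / 2) * z ^ 2 := by
    funext z
    have h := (((hasDerivAt_const z (1 : ℂ)).sub ((hasDerivAt_id z).const_mul a)).add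
      ((hasDerivAt_pow 2 z).const_mul (3 * a ^ 2 / 2))).add
      ((hasDerivAt_pow 3 z).const_mul (2 * b - 3 * a ^ 3 / 2))
    have h2 : deriv (fun z : ℂ =>
        1 - a * z + 3 * a ^ 2 / 2 * z ^ 2 + (2 * b - 3 * a ^ 3 / 2) * z ^ 3) z = _ :=
      HasDerivAt.deriv h
    rw [h2]
    push_cast
    norm_num
    ring
  have hT3 : deriv (fun z : ℂ => -a + 3 * a ^ 2 * z + (6 * b - 9 * a ^ 3 / 2) * z ^ 2)
      = fun z => 3 * a ^ 2 + (12 * b - 9 * a ^ 3) * z := by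
    funext z
    have h := ((hasDerivAt_const z (-a)).add ((hasDerivAt_id z).const_mul (3 * a ^ 2))).add
      ((hasDerivAt_pow 2 z).const_mul (6 * b - 9 * a ^ 3 / 2))
    have h2 : deriv (fun z : ℂ => -a + 3 * a ^ 2 * z + (6 * b - 9 * a ^ 3 / 2) * z ^ 2) z = _ :=
      HasDerivAt.deriv h
    rw [h2]
    push_cast
    norm_num
    ring
  have hT4 : deriv (fun z : ℂ => 3 * a ^ 2 + (12 * b - 9 * a ^ 3) * z)
      = fun _ => 12 * b - 9 * a ^ 3 := by
    funext z
    have h := (hasDerivAt_const z (3 * a ^ 2)).add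
      ((hasDerivAt_id z).const_mul (12 * b - 9 * a ^ 3))
    have h2 : deriv (fun z : ℂ => 3 * a ^ 2 + (12 * b - 9 * a ^ 3) * z) z = _ :=
      HasDerivAt.deriv h
    rw [h2]
    ring
  have hTT1 : iteratedDeriv 1 (TT a b) = fun z =>
      1 - a * z + 3 * a ^ 2 / 2 * z ^ 2 + (2 * b - 3 * a ^ 3 / 2) * z ^ 3 := by
    rw [iteratedDeriv_one, hT1]
  have hTT2 : iteratedDeriv 2 (TT a b)
      = fun z => -a + 3 * a ^ 2 * z + (6 * b - 9 * a ^ 3 / 2) * z ^ 2 := by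
    rw [show iteratedDeriv 2 (TT a b) = deriv (iteratedDeriv 1 (TT a b)) from iteratedDeriv_succ, hTT1, hT2]
  have hTT3 : iteratedDeriv 3 (TT a b) = fun z => 3 * a ^ 2 + (12 * b - 9 * a ^ 3) * z := by
    rw [show (3 : ℕ) = 2 + 1 from rfl, iteratedDeriv_succ, hTT2, hT3]
  have hTT4 : iteratedDeriv 4 (TT a b) = fun _ => 12 * b - 9 * a ^ 3 := by
    rw [show (4 : ℕ) = 3 + 1 from rfl, iteratedDeriv_succ, hTT3, hT4]
  -- splitting lemma for the iterated derivatives of F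
  have hsplit : ∀ k : ℕ, k < 5 →
      iteratedDeriv k (fun z => TT a b z + z ^ 5 * (SS a b E z / DD a b g2 g3 E z)) 0
        = iteratedDeriv k (TT a b) 0 := by
    intro k hk
    rw [iteratedDeriv_add_at k hTTa hGa,
      iteratedDeriv_pow_mul_eq_zero k 5 (fun z => SS a b E z / DD a b g2 g3 E z) hHa hk,
      add_zero]
  -- the local description of P and its derivative
  have hcomb : ∀ᶠ z in 𝓝 (0 : ℂ),
      (z ∈ ({0}ᶜ : Set ℂ) → P z = 1 / z ^ 2 + g2 / 20 * z ^ 2 + g3 / 28 * z ^ 4 + z ^ 6 * E z)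
        ∧ AnalyticAt ℂ E z := (eventually_nhdsWithin_iff.mp hP).and hE
  obtain ⟨t, ht, ht_open, ht0⟩ := eventually_nhds_iff.mp hcomb
  have hderiv : ∀ z ∈ t, z ≠ 0 → deriv P z
      = -2 / z ^ 3 + g2 / 10 * z + g3 / 7 * z ^ 3 + 6 * z ^ 5 * E z + z ^ 6 * deriv E z := by
    intro z hzt hz
    have hloc : P =ᶠ[𝓝 z]
        fun w => 1 / w ^ 2 + g2 / 20 * w ^ 2 + g3 / 28 * w ^ 4 + w ^ 6 * E w := by
      apply eventually_nhds_iff.mpr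
      exact ⟨t ∩ {0}ᶜ, fun w hw => (ht w hw.1).1 hw.2,
        ht_open.inter isOpen_compl_singleton, hzt, hz⟩
    rw [hloc.deriv_eq]
    have hEz : HasDerivAt E (deriv E z) z := (ht z hzt).2.differentiableAt.hasDerivAt
    have h2 : (z : ℂ) ^ 2 ≠ 0 := pow_ne_zero _ hz
    have hA : HasDerivAt (fun w : ℂ => 1 / w ^ 2)
        ((0 * z ^ 2 - 1 * (↑2 * z ^ (2 - 1))) / (z ^ 2) ^ 2) z :=
      (hasDerivAt_const z (1 : ℂ)).div (hasDerivAt_pow 2 z) h2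
    have hB := (hasDerivAt_pow 2 z).const_mul (g2 / 20)
    have hC := (hasDerivAt_pow 4 z).const_mul (g3 / 28)
    have hD' := (hasDerivAt_pow 6 z).mul hEz
    have hsum := ((hA.add hB).add hC).add hD'
    rw [HasDerivAt.deriv (f := fun w => 1 / w ^ 2 + g2 / 20 * w ^ 2 + g3 / 28 * w ^ 4 + w ^ 6 * E w) hsum]
    push_cast
    norm_num
    field_simp
    ring
  refine ⟨fun z => TT a b z + z ^ 5 * (SS a b E z / DD a b g2 g3 E z),
    hTTa.add hGa, ?_, ?_, ?_, ?_, ?_, ?_⟩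
  · -- eventual equality
    have hDne : ∀ᶠ z in 𝓝 (0 : ℂ), DD a b g2 g3 E z ≠ 0 :=
      hDDa.continuousAt.eventually_ne hDDne
    have h5 : ∀ᶠ z in 𝓝 (0 : ℂ), z ∈ t :=
      eventually_of_mem (ht_open.mem_nhds ht0) (fun x hx => hx)
    filter_upwards [hP, hDne.filter_mono nhdsWithin_le_nhds,
      h5.filter_mono nhdsWithin_le_nhds, self_mem_nhdsWithin] with z h1 hDz h3 h4
    have hz : z ≠ 0 := h4
    have hz3 : (z : ℂ) ^ 3 ≠ 0 := pow_ne_zero _ hz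
    have h2' := hderiv z h3 hz
    have hp : z ^ 2 * (1 / z ^ 2) = 1 := by field_simp
    have hq : z ^ 3 * (1 / z ^ 3) = 1 := by field_simp
    have hnum : 2 * (1 / z ^ 2 + g2 / 20 * z ^ 2 + g3 / 28 * z ^ 4 + z ^ 6 * E z) + a ^ 2 / 2
        = NN a b g2 g3 E z / z ^ 3 := by
      rw [eq_div_iff hz3]
      simp only [NN]
      linear_combination (2 * z : ℂ) * hp
    have hden : (-2 / z ^ 3 + g2 / 10 * z + g3 / 7 * z ^ 3 + 6 * z ^ 5 * E z
          + z ^ 6 * deriv E z)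
          - a * (1 / z ^ 2 + g2 / 20 * z ^ 2 + g3 / 28 * z ^ 4 + z ^ 6 * E z) + b - a ^ 3 / 4
        = DD a b g2 g3 E z / z ^ 3 := by
      rw [eq_div_iff hz3]
      simp only [DD]
      linear_combination (-2 : ℂ) * hq + (-(a * z)) * hp
    have hcomb2 : TT a b z + z ^ 5 * (SS a b E z / DD a b g2 g3 E z)
        = (TT a b z * DD a b g2 g3 E z + z ^ 5 * SS a b E z) / DD a b g2 g3 E z := by
      field_simp
    rw [hcomb2, h1, h2', hnum, hden, neg_div, div_div_div_cancel_right₀ hz3, ← neg_div]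
    congr 1
    linear_combination (-1 : ℂ) * key_identity_s14 a b g2 g3 hg2 hg3 E z
  · -- F 0 = 0
    simp [TT]
  · -- deriv F 0 = 1
    rw [← iteratedDeriv_one, hsplit 1 (by norm_num), hTT1]
    simp
  · rw [hsplit 2 (by norm_num), hTT2]
    simp
  · rw [hsplit 3 (by norm_num), hTT3]
    simp
  · rw [hsplit 4 (by norm_num), hTT4]
end

section
/- For any α, β and the series f(x) = (e^{αx} − e^{βx})/(α e^{αx} − β e^{βx}) = x + Σ fₖ x^{k+1}/(k+1)!, the coefficient relation f₄ = 15f₁⁴ − 25f₁²f₂ + 7f₁f₃ + 4f₂² holds. -/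
/-- `f(x) = (e^{αx} − e^{βx})/(α e^{αx} − β e^{βx})` as a formal power series. -/
noncomputable def fTodd (α β : ℂ) : PowerSeries ℂ :=
  (PowerSeries.rescale α (PowerSeries.exp ℂ) - PowerSeries.rescale β (PowerSeries.exp ℂ)) *
    (PowerSeries.C α * PowerSeries.rescale α (PowerSeries.exp ℂ) -
      PowerSeries.C β * PowerSeries.rescale β (PowerSeries.exp ℂ))⁻¹

/-- The coefficient `fₖ` in the expansion `f(x) = x + Σ fₖ x^{k+1}/(k+1)!`. -/
noncomputable def fk (α β : ℂ) (k : ℕ) : ℂ :=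
  ((k + 1).factorial : ℂ) * PowerSeries.coeff (k + 1) (fTodd α β)

/-- The Todd series satisfies `f₄ = 15f₁⁴ − 25f₁²f₂ + 7f₁f₃ + 4f₂²`. -/
theorem stmt_19 (α β : ℂ) (hαβ : α ≠ β) :
    fk α β 4 = 15 * (fk α β 1) ^ 4 - 25 * (fk α β 1) ^ 2 * fk α β 2
      + 7 * fk α β 1 * fk α β 3 + 4 * (fk α β 2) ^ 2 := by
  have hne : α - β ≠ 0 := sub_ne_zero.mpr hαβ
  set E : ℂ → PowerSeries ℂ := fun γ => PowerSeries.rescale γ (PowerSeries.exp ℂ) with hE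
  set D : PowerSeries ℂ := PowerSeries.C α * E α - PowerSeries.C β * E β with hDdef
  have hcE : ∀ (γ : ℂ) (n : ℕ), PowerSeries.coeff n (E γ) = γ ^ n / (n.factorial : ℂ) := by
    intro γ n
    rw [hE]
    simp only [PowerSeries.coeff_rescale, PowerSeries.coeff_exp]
    push_cast
    ring
  have hcD : ∀ n : ℕ, PowerSeries.coeff n D =
      (α ^ (n + 1) - β ^ (n + 1)) / (n.factorial : ℂ) := by
    intro n
    rw [hDdef]
    simp only [map_sub, PowerSeries.coeff_C_mul, hcE]
    ring
  have hD0 : PowerSeries.constantCoeff D = α - β := by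
    rw [← PowerSeries.coeff_zero_eq_constantCoeff_apply, hcD]
    simp
  have hf : fTodd α β = (E α - E β) * D⁻¹ := rfl
  have hmul : fTodd α β * D = E α - E β := by
    rw [hf, mul_assoc, PowerSeries.inv_mul_cancel D (by rw [hD0]; exact hne), mul_one]
  have hEq : ∀ n : ℕ, ∑ k ∈ Finset.range (n + 1),
      PowerSeries.coeff k (fTodd α β) *
        ((α ^ (n - k + 1) - β ^ (n - k + 1)) / ((n - k).factorial : ℂ))
      = (α ^ n - β ^ n) / (n.factorial : ℂ) := by
    intro n
    have : PowerSeries.coeff n (fTodd α β * D) = (α ^ n - β ^ n) / (n.factorial : ℂ) := by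
      rw [hmul, map_sub, hcE, hcE]; ring
    rw [PowerSeries.coeff_mul, Finset.Nat.sum_antidiagonal_eq_sum_range_succ_mk] at this
    rw [← this]
    exact Finset.sum_congr rfl fun k _ => by rw [hcD]
  have h0 := hEq 0
  have h1 := hEq 1
  have h2 := hEq 2
  have h3 := hEq 3
  have h4 := hEq 4
  have h5 := hEq 5
  norm_num [Finset.sum_range_succ, Nat.factorial] at h0 h1 h2 h3 h4 h5
  have hc0 : PowerSeries.constantCoeff (fTodd α β) = 0 := h0.resolve_right hne
  rw [hc0] at h1 h2 h3 h4 h5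
  have hc1 : PowerSeries.coeff 1 (fTodd α β) = 1 := by
    apply mul_left_cancel₀ hne
    linear_combination h1
  rw [hc1] at h2 h3 h4 h5
  have hc2 : PowerSeries.coeff 2 (fTodd α β) = -(α + β) / 2 := by
    apply mul_left_cancel₀ hne
    linear_combination h2
  rw [hc2] at h3 h4 h5
  have hc3 : PowerSeries.coeff 3 (fTodd α β) = (α ^ 2 + 4 * α * β + β ^ 2) / 6 := by
    apply mul_left_cancel₀ hne
    linear_combination h3
  rw [hc3] at h4 h5
  have hc4 : PowerSeries.coeff 4 (fTodd α β)
      = -(α ^ 3 + 11 * α ^ 2 * β + 11 * α * β ^ 2 + β ^ 3) / 24 := by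
    apply mul_left_cancel₀ hne
    linear_combination h4
  rw [hc4] at h5
  have hc5 : PowerSeries.coeff 5 (fTodd α β)
      = (α ^ 4 + 26 * α ^ 3 * β + 66 * α ^ 2 * β ^ 2 + 26 * α * β ^ 3 + β ^ 4) / 120 := by
    apply mul_left_cancel₀ hne
    linear_combination h5
  simp only [fk]
  norm_num [hc2, hc3, hc4, hc5, Nat.factorial]
  ring
end
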